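/- The following relations hold among binary frame templates: Φ_{Y₁}⪯Φ_X, Φ_{Y₁}⪯Φ_C, Φ_{Y₀}⪯Φ_C, Φ_C⪯Φ_{CX}, and Φ_X⪯Φ_{CX}. -/

import Mathlib

open Matroid Set

namespace TemplatePaper

variable {α β γ : Type*}

/-- Matroid isomorphism. -/
def MIso (M : Matroid α) (N : Matroid β) : Prop :=
  ∃ f : α → β, Set.BijOn f M.E N.E ∧ ∀ I ⊆ M.E, (M.Indep I ↔ N.Indep (f '' I))

/-- `N` is the contraction `M ／ K`. -/
def IsContraction (N M : Matroid α) (K : Set α) : Prop :=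
  N.E = M.E \ K ∧
    ∀ I : Set α, N.Indep I ↔
      (I ⊆ M.E \ K ∧ ∃ J, M.IsBasis J (K ∩ M.E) ∧ M.Indep (I ∪ J))

/-- `N` is a minor of `M` (obtained by a contraction followed by a deletion). -/
def MinorOf (N M : Matroid α) : Prop :=
  ∃ (N₁ : Matroid α) (K D : Set α), IsContraction N₁ M K ∧ N = N₁ ↾ (N₁.E \ D)

/-- `M` has a minor isomorphic to `P`. -/
def HasIsoMinor (M : Matroid α) (P : Matroid β) : Prop :=
  ∃ N : Matroid α, MinorOf N M ∧ MIso P N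

/-- A simple matroid: every subset of the ground set with at most two elements
is independent. -/
def IsSimple (M : Matroid α) : Prop :=
  ∀ I ⊆ M.E, I.ncard ≤ 2 → M.Indep I

/-- The rank of a set in a matroid (as a natural number; intended for finite matroids). -/
noncomputable def rkOf (M : Matroid α) (X : Set α) : ℕ :=
  sSup {n | ∃ I, I ⊆ X ∧ M.Indep I ∧ I.ncard = n}

/-- The rank of a matroid. -/
noncomputable def rk (M : Matroid α) : ℕ := rkOf M M.E

/-- A matroid is vertically `k`-connected if for every partition `(X, Y)` of the ground
set with `r(X) + r(Y) - r(M) < k - 1`, either `X` or `Y` is spanning. -/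
def VertConn (M : Matroid α) (k : ℕ) : Prop :=
  ∀ X Y : Set α, X ∪ Y = M.E → Disjoint X Y →
    (rkOf M X : ℤ) + (rkOf M Y : ℤ) - (rk M : ℤ) < (k : ℤ) - 1 →
    M.Spanning X ∨ M.Spanning Y

/-- `M` is represented (on its ground set) by the matrix `A` over `F`:
independence in `M` coincides with linear independence of the corresponding columns. -/
def IsRepBy (F : Type*) [Field F] (M : Matroid α) (A : β → α → F) : Prop :=
  ∀ I ⊆ M.E, (M.Indep I ↔ LinearIndependent F (fun e : I => fun b => A b (e : α)))

/-- A binary matroid: a matroid representable over `GF(2)`. -/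
def IsBinary (M : Matroid α) : Prop :=
  ∃ (m : ℕ) (A : Fin m → α → ZMod 2), IsRepBy (ZMod 2) M A

/-- A graphic matroid: the cycle matroid of a graph.  Equivalently (as is standard for
binary matroids, and as used in the paper), a matroid representable over `GF(2)` by a
matrix in which every column has at most two nonzero entries. -/
def IsGraphic (M : Matroid α) : Prop :=
  ∃ (m : ℕ) (A : Fin m → α → ZMod 2),
    IsRepBy (ZMod 2) M A ∧ ∀ e ∈ M.E, {i | A i e ≠ 0}.ncard ≤ 2

/-- A cographic matroid: the dual of a graphic matroid. -/
def IsCographic (M : Matroid α) : Prop := IsGraphic M✶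

/-- `G` is (isomorphic to) the binary projective geometry `PG(m-1, 2)`:
its ground set is in bijection with the nonzero vectors of `GF(2)^m`, with independence
given by linear independence. -/
def IsPG (m : ℕ) (G : Matroid γ) : Prop :=
  ∃ f : γ → (Fin m → ZMod 2),
    Set.BijOn f G.E {v | v ≠ 0} ∧
    ∀ I ⊆ G.E, (G.Indep I ↔ LinearIndependent (ZMod 2) (fun e : I => f (e : γ)))

/-- The set of sizes of simple rank-`≤ r` matroids in a class `𝓜`; the growth rate
function of `𝓜` at `r` is the greatest element of this set. -/
def sizesOfRank (𝓜 : Set (Matroid ℕ)) (r : ℕ) : Set ℕ :=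
  {n | ∃ M ∈ 𝓜, M.E.Finite ∧ IsSimple M ∧ rk M ≤ r ∧ M.E.ncard = n}

/-- The growth rate function of `𝓜` agrees with `f` for all but finitely many `r`. -/
def GrowthRateEventually (𝓜 : Set (Matroid ℕ)) (f : ℕ → ℕ) : Prop :=
  ∃ N : ℕ, ∀ r ≥ N, IsGreatest (sizesOfRank 𝓜 r) (f r)

/-- A minor-closed class of matroids (closed under minors and isomorphism). -/
def MinorClosed (𝓜 : Set (Matroid ℕ)) : Prop :=
  (∀ M ∈ 𝓜, ∀ N : Matroid ℕ, MinorOf N M → N ∈ 𝓜) ∧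
  (∀ M ∈ 𝓜, ∀ N : Matroid ℕ, MIso N M → N ∈ 𝓜)

/-- The class of binary matroids with no minor isomorphic to `P`. -/
def EX (P : Matroid β) : Set (Matroid ℕ) :=
  {M | M.E.Finite ∧ IsBinary M ∧ ¬HasIsoMinor M P}

/-- The subgroup of `F^ℕ` of all vectors supported on the finite set `S`
(used to encode subgroups of `F^S` for varying index sets `S`). -/
def fullOn (F : Type*) [Field F] (S : Finset ℕ) : AddSubgroup (ℕ → F) where
  carrier := {v | ∀ i ∉ S, v i = 0}
  add_mem' := by
    intro a b ha hb i hi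
    simp [Pi.add_apply, ha i hi, hb i hi]
  zero_mem' := by intro i _; rfl
  neg_mem' := by
    intro a ha i hi
    simp [Pi.neg_apply, ha i hi]

/-- Restriction of a vector to the coordinates in `S` (zero elsewhere); used to encode
the projection of a subgroup of `F^T` into `F^S`. -/
def maskOn {F : Type*} [Field F] (S : Finset ℕ) (v : ℕ → F) : ℕ → F :=
  fun i => if i ∈ S then v i else 0

/-- A frame template over `F`.  The disjoint finite sets `C, X, Y₀, Y₁` are encoded as
disjoint finite subsets of `ℕ`; the matrix `A₁ ∈ F^{X × (C ∪ Y₀ ∪ Y₁)}` is encoded as a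
function `ℕ → ℕ → F` supported on `X × (C ∪ Y₀ ∪ Y₁)`; the subgroups
`Λ ≤ F^X` and `Δ ≤ F^{C ∪ Y₀ ∪ Y₁}` are encoded as subgroups of `F^ℕ` of vectors
supported on the relevant sets, closed under scaling by elements of `Γ`. -/
structure FrameTemplate (F : Type) [Field F] where
  Γ : Subgroup Fˣ
  C : Finset ℕ
  X : Finset ℕ
  Y0 : Finset ℕ
  Y1 : Finset ℕ
  disj : List.Pairwise Disjoint [C, X, Y0, Y1]
  A1 : ℕ → ℕ → F
  A1_supp : ∀ i j, A1 i j ≠ 0 → i ∈ X ∧ j ∈ C ∪ Y0 ∪ Y1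
  Δ : AddSubgroup (ℕ → F)
  Δ_supp : ∀ v ∈ Δ, ∀ j ∉ C ∪ Y0 ∪ Y1, v j = 0
  Δ_smul : ∀ γ ∈ Γ, ∀ v ∈ Δ, (γ : F) • v ∈ Δ
  Λ : AddSubgroup (ℕ → F)
  Λ_supp : ∀ v ∈ Λ, ∀ i ∉ X, v i = 0
  Λ_smul : ∀ γ ∈ Γ, ∀ v ∈ Λ, (γ : F) • v ∈ Λ

namespace FrameTemplate

variable {F : Type} [Field F]

/-- The column index set `C ∪ Y₀ ∪ Y₁` of `A₁`. -/
def CY (Φ : FrameTemplate F) : Finset ℕ := Φ.C ∪ Φ.Y0 ∪ Φ.Y1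

end FrameTemplate

section Columns

variable {F : Type} [Field F]

/-- A column that is zero on the rows in `S`. -/
def IsZeroColOn (S : Set ℕ) (v : ℕ → F) : Prop := ∀ b ∈ S, v b = 0

/-- A unit column on the rows in `S`. -/
def IsUnitColOn (S : Set ℕ) (v : ℕ → F) : Prop :=
  ∃ b ∈ S, v b = 1 ∧ ∀ b' ∈ S, b' ≠ b → v b' = 0

/-- A column of a `Γ`-frame matrix (restricted to the rows in `S`): at most two nonzero
entries, a nonzero column contains a `1`, and a second nonzero entry equals `-γ` for
some `γ ∈ Γ`. -/
def IsFrameColOn (Γ : Subgroup Fˣ) (S : Set ℕ) (v : ℕ → F) : Prop :=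
  IsZeroColOn S v ∨ IsUnitColOn S v ∨
    ∃ b₁ ∈ S, ∃ b₂ ∈ S, b₁ ≠ b₂ ∧ v b₁ = 1 ∧ (∃ γ ∈ Γ, v b₂ = -(γ : F)) ∧
      ∀ b ∈ S, b ≠ b₁ → b ≠ b₂ → v b = 0

end Columns

namespace FrameTemplate

variable {F : Type} [Field F]

/-- A matrix `A'` (with row set `B` and column set `E`, encoded as a function `ℕ → ℕ → F`
supported on `B × E`) respects the template `Φ`, with `Z ⊆ E` as the distinguished set of
columns, and with the columns of `A'[B - X, Z]` required to satisfy `zcol`.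
Taking `zcol` to be "unit column" gives `Respects`; allowing zero columns as well gives
`VRespects` (virtually respects). -/
def RespectsWith (zcol : Set ℕ → (ℕ → F) → Prop) (Φ : FrameTemplate F)
    (B E Z : Finset ℕ) (A' : ℕ → ℕ → F) : Prop :=
  Φ.X ⊆ B ∧ Φ.CY ⊆ E ∧ Z ⊆ E ∧ Disjoint Z Φ.CY ∧
  (∀ i j, A' i j ≠ 0 → i ∈ B ∧ j ∈ E) ∧
  (∀ i ∈ Φ.X, ∀ j ∈ Φ.CY, A' i j = Φ.A1 i j) ∧
  (∀ i ∈ Φ.X, ∀ j ∈ Z, A' i j = 0) ∧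
  (∀ j ∈ Z, zcol (↑B \ ↑Φ.X : Set ℕ) (fun i => A' i j)) ∧
  (∀ j ∈ E, j ∉ Φ.CY → j ∉ Z →
    IsFrameColOn Φ.Γ (↑B \ ↑Φ.X : Set ℕ) (fun i => A' i j)) ∧
  (∀ j ∈ E, j ∉ Φ.CY → j ∉ Z → maskOn Φ.X (fun i => A' i j) ∈ Φ.Λ) ∧
  (∀ i ∈ B, i ∉ Φ.X → maskOn Φ.CY (fun j => A' i j) ∈ Φ.Δ)

/-- `A'` respects `Φ`. -/
def Respects (Φ : FrameTemplate F) (B E Z : Finset ℕ) (A' : ℕ → ℕ → F) : Prop :=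
  RespectsWith (fun S v => IsUnitColOn S v) Φ B E Z A'

/-- `A'` virtually respects `Φ` (columns of `A'[B - X, Z]` may be unit or zero). -/
def VRespects (Φ : FrameTemplate F) (B E Z : Finset ℕ) (A' : ℕ → ℕ → F) : Prop :=
  RespectsWith (fun S v => IsZeroColOn S v ∨ IsUnitColOn S v) Φ B E Z A'

/-- `A` is constructed from `A'`: they agree outside the `Z`-columns, and each
`Z`-column of `A` is the corresponding column of `A'` plus some `Y₁`-column of `A'`. -/
def BuiltFrom (Φ : FrameTemplate F) (Z : Finset ℕ) (A' A : ℕ → ℕ → F) : Prop :=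
  (∀ j ∉ Z, ∀ i, A i j = A' i j) ∧
  (∀ j ∈ Z, ∃ y ∈ Φ.Y1, ∀ i, A i j = A' i j + A' i y)

end FrameTemplate

/-- `N` is the column (vector) matroid of the matrix `A` (rows indexed by `β`),
with ground set `E`. -/
def IsColMatroidOf {β : Type*} {F : Type} [Field F] (N : Matroid ℕ) (E : Finset ℕ)
    (A : β → ℕ → F) : Prop :=
  N.E = ↑E ∧ ∀ I : Set ℕ,
    (N.Indep I ↔ I ⊆ ↑E ∧ LinearIndependent F (fun e : I => fun i => A i (e : ℕ)))

namespace FrameTemplate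

variable {F : Type} [Field F]

/-- `M` conforms to `Φ` (with the respecting condition given by `resp`): `M` is isomorphic
to `M(A) ／ C ＼ Y₁` for a matrix `A` built from a matrix `A'` satisfying `resp`. -/
def ConformsWith (resp : FrameTemplate F → Finset ℕ → Finset ℕ → Finset ℕ →
      (ℕ → ℕ → F) → Prop) (M : Matroid α) (Φ : FrameTemplate F) : Prop :=
  ∃ (B E Z : Finset ℕ) (A' A : ℕ → ℕ → F) (N N₁ : Matroid ℕ),
    resp Φ B E Z A' ∧ Φ.BuiltFrom Z A' A ∧ IsColMatroidOf N E A ∧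
    IsContraction N₁ N ↑Φ.C ∧ MIso M (N₁ ↾ (N₁.E \ ↑Φ.Y1))

/-- `M` conforms to `Φ`. -/
def Conforms (M : Matroid α) (Φ : FrameTemplate F) : Prop :=
  ConformsWith (fun Φ B E Z A' => Φ.Respects B E Z A') M Φ

/-- `M` virtually conforms to `Φ`. -/
def VConforms (M : Matroid α) (Φ : FrameTemplate F) : Prop :=
  ConformsWith (fun Φ B E Z A' => Φ.VRespects B E Z A') M Φ

end FrameTemplate

namespace FrameTemplate

variable {F : Type} [Field F]

/-- Operation (1): replace `Γ` with a proper subgroup. -/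
def Op1 (Φ Φ' : FrameTemplate F) : Prop :=
  Φ'.Γ < Φ.Γ ∧ Φ'.C = Φ.C ∧ Φ'.X = Φ.X ∧ Φ'.Y0 = Φ.Y0 ∧ Φ'.Y1 = Φ.Y1 ∧
    Φ'.A1 = Φ.A1 ∧ Φ'.Δ = Φ.Δ ∧ Φ'.Λ = Φ.Λ

/-- Operation (2): replace `Λ` with a proper subgroup (closed under scaling by `Γ`). -/
def Op2 (Φ Φ' : FrameTemplate F) : Prop :=
  Φ'.Γ = Φ.Γ ∧ Φ'.C = Φ.C ∧ Φ'.X = Φ.X ∧ Φ'.Y0 = Φ.Y0 ∧ Φ'.Y1 = Φ.Y1 ∧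
    Φ'.A1 = Φ.A1 ∧ Φ'.Δ = Φ.Δ ∧ Φ'.Λ < Φ.Λ

/-- Operation (3): replace `Δ` with a proper subgroup (closed under scaling by `Γ`). -/
def Op3 (Φ Φ' : FrameTemplate F) : Prop :=
  Φ'.Γ = Φ.Γ ∧ Φ'.C = Φ.C ∧ Φ'.X = Φ.X ∧ Φ'.Y0 = Φ.Y0 ∧ Φ'.Y1 = Φ.Y1 ∧
    Φ'.A1 = Φ.A1 ∧ Φ'.Δ < Φ.Δ ∧ Φ'.Λ = Φ.Λ

/-- Operation (4): remove an element `y` from `Y₁`. -/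
def Op4 (Φ Φ' : FrameTemplate F) : Prop :=
  ∃ y ∈ Φ.Y1, Φ'.Γ = Φ.Γ ∧ Φ'.C = Φ.C ∧ Φ'.X = Φ.X ∧ Φ'.Y0 = Φ.Y0 ∧
    Φ'.Y1 = Φ.Y1.erase y ∧
    Φ'.A1 = (fun i j => if j = y then 0 else Φ.A1 i j) ∧
    (Φ'.Δ : Set (ℕ → F)) = maskOn Φ'.CY '' ↑Φ.Δ ∧ Φ'.Λ = Φ.Λ

/-- An elementary row operation on the rows indexed by `X`. -/
def ElemRowOp (X : Finset ℕ) (e : (ℕ → F) → (ℕ → F)) : Prop :=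
  (∃ x₁ ∈ X, ∃ x₂ ∈ X, x₁ ≠ x₂ ∧ e = fun v => v ∘ Equiv.swap x₁ x₂) ∨
  (∃ x ∈ X, ∃ c : F, c ≠ 0 ∧ e = fun v i => if i = x then c * v i else v i) ∨
  (∃ x₁ ∈ X, ∃ x₂ ∈ X, x₁ ≠ x₂ ∧
    ∃ c : F, e = fun v i => if i = x₂ then v i + c * v x₁ else v i)

/-- Operation (5): perform an elementary row operation on the `X`-rows of every matrix
respecting `Φ`; this alters `A₁` and performs a change of basis on `Λ`. -/
def Op5 (Φ Φ' : FrameTemplate F) : Prop :=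
  ∃ e, ElemRowOp Φ.X e ∧
    Φ'.Γ = Φ.Γ ∧ Φ'.C = Φ.C ∧ Φ'.X = Φ.X ∧ Φ'.Y0 = Φ.Y0 ∧ Φ'.Y1 = Φ.Y1 ∧
    Φ'.A1 = (fun i j => e (fun i' => Φ.A1 i' j) i) ∧
    Φ'.Δ = Φ.Δ ∧ (Φ'.Λ : Set (ℕ → F)) = e '' ↑Φ.Λ

/-- Operation (6): remove an element `x ∈ X` whose row is zero in every matrix
respecting `Φ`. -/
def Op6 (Φ Φ' : FrameTemplate F) : Prop :=
  ∃ x ∈ Φ.X, (∀ B E Z A', Φ.Respects B E Z A' → ∀ j, A' x j = 0) ∧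
    Φ'.Γ = Φ.Γ ∧ Φ'.C = Φ.C ∧ Φ'.X = Φ.X.erase x ∧ Φ'.Y0 = Φ.Y0 ∧ Φ'.Y1 = Φ.Y1 ∧
    Φ'.A1 = (fun i j => if i = x then 0 else Φ.A1 i j) ∧
    Φ'.Δ = Φ.Δ ∧ (Φ'.Λ : Set (ℕ → F)) = maskOn (Φ.X.erase x) '' ↑Φ.Λ

/-- Operation (7): contract an element `c ∈ C` whose `A₁`-column is a unit column with
its nonzero entry in row `x`, where `λ_x = 0` for all `λ ∈ Λ` or `δ_c = 0` for all
`δ ∈ Δ`; remove `c` from `C` and `x` from `X`. -/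
def Op7 (Φ Φ' : FrameTemplate F) : Prop :=
  ∃ c ∈ Φ.C, ∃ x ∈ Φ.X,
    Φ.A1 x c = 1 ∧ (∀ i, i ≠ x → Φ.A1 i c = 0) ∧
    ((∀ v ∈ Φ.Λ, v x = 0) ∨ (∀ v ∈ Φ.Δ, v c = 0)) ∧
    Φ'.Γ = Φ.Γ ∧ Φ'.C = Φ.C.erase c ∧ Φ'.X = Φ.X.erase x ∧
    Φ'.Y0 = Φ.Y0 ∧ Φ'.Y1 = Φ.Y1 ∧
    Φ'.A1 = (fun i j => if i = x ∨ j = c then 0 else Φ.A1 i j) ∧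
    (Φ'.Λ : Set (ℕ → F)) = maskOn (Φ.X.erase x) '' ↑Φ.Λ ∧
    (Φ'.Δ : Set (ℕ → F)) =
      maskOn Φ'.CY '' ((fun v : ℕ → F => v - v c • Φ.A1 x) '' ↑Φ.Δ)

/-- Operation (8): remove an element `c ∈ C` whose `A₁`-column is zero and with
`δ_c = 0` for all `δ ∈ Δ`. -/
def Op8 (Φ Φ' : FrameTemplate F) : Prop :=
  ∃ c ∈ Φ.C, (∀ i, Φ.A1 i c = 0) ∧ (∀ v ∈ Φ.Δ, v c = 0) ∧
    Φ'.Γ = Φ.Γ ∧ Φ'.C = Φ.C.erase c ∧ Φ'.X = Φ.X ∧ Φ'.Y0 = Φ.Y0 ∧ Φ'.Y1 = Φ.Y1 ∧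
    Φ'.A1 = Φ.A1 ∧ (Φ'.Δ : Set (ℕ → F)) = maskOn Φ'.CY '' ↑Φ.Δ ∧ Φ'.Λ = Φ.Λ

/-- Operation (10): remove an element `y` from `Y₀` (deleting `y` from every matroid
conforming to `Φ`). -/
def Op10 (Φ Φ' : FrameTemplate F) : Prop :=
  ∃ y ∈ Φ.Y0, Φ'.Γ = Φ.Γ ∧ Φ'.C = Φ.C ∧ Φ'.X = Φ.X ∧ Φ'.Y0 = Φ.Y0.erase y ∧
    Φ'.Y1 = Φ.Y1 ∧
    Φ'.A1 = (fun i j => if j = y then 0 else Φ.A1 i j) ∧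
    (Φ'.Δ : Set (ℕ → F)) = maskOn Φ'.CY '' ↑Φ.Δ ∧ Φ'.Λ = Φ.Λ

/-- Operation (11): for `x ∈ X` with `λ_x = 0` for every `λ ∈ Λ` and `y ∈ Y₀` whose
`A₁`-column is (after row operations, which are available as operation (5)) a unit
column with nonzero entry in row `x`, contract `y` from every matroid conforming
to `Φ`. -/
def Op11 (Φ Φ' : FrameTemplate F) : Prop :=
  ∃ y ∈ Φ.Y0, ∃ x ∈ Φ.X,
    (∀ v ∈ Φ.Λ, v x = 0) ∧ Φ.A1 x y = 1 ∧ (∀ i, i ≠ x → Φ.A1 i y = 0) ∧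
    Φ'.Γ = Φ.Γ ∧ Φ'.C = Φ.C ∧ Φ'.X = Φ.X.erase x ∧ Φ'.Y0 = Φ.Y0.erase y ∧
    Φ'.Y1 = Φ.Y1 ∧
    Φ'.A1 = (fun i j => if i = x ∨ j = y then 0 else Φ.A1 i j) ∧
    (Φ'.Λ : Set (ℕ → F)) = maskOn (Φ.X.erase x) '' ↑Φ.Λ ∧
    (Φ'.Δ : Set (ℕ → F)) =
      maskOn Φ'.CY '' ((fun v : ℕ → F => v - v y • Φ.A1 x) '' ↑Φ.Δ)

/-- Operation (12): for `y ∈ Y₀` with `δ_y = 0` for every `δ ∈ Δ`, contract `y` from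
every matroid conforming to `Φ`.  If the `A₁`-column of `y` is zero this just removes
`y`; otherwise (after row operations, available as operation (5)) the column of `y` is a
unit column with nonzero entry in some row `x`, which is removed together with `y`. -/
def Op12 (Φ Φ' : FrameTemplate F) : Prop :=
  ∃ y ∈ Φ.Y0, (∀ v ∈ Φ.Δ, v y = 0) ∧
    (((∀ i, Φ.A1 i y = 0) ∧
      Φ'.Γ = Φ.Γ ∧ Φ'.C = Φ.C ∧ Φ'.X = Φ.X ∧ Φ'.Y0 = Φ.Y0.erase y ∧ Φ'.Y1 = Φ.Y1 ∧
      Φ'.A1 = Φ.A1 ∧ (Φ'.Δ : Set (ℕ → F)) = maskOn Φ'.CY '' ↑Φ.Δ ∧ Φ'.Λ = Φ.Λ) ∨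
    (∃ x ∈ Φ.X, Φ.A1 x y = 1 ∧ (∀ i, i ≠ x → Φ.A1 i y = 0) ∧
      Φ'.Γ = Φ.Γ ∧ Φ'.C = Φ.C ∧ Φ'.X = Φ.X.erase x ∧ Φ'.Y0 = Φ.Y0.erase y ∧
      Φ'.Y1 = Φ.Y1 ∧
      Φ'.A1 = (fun i j => if i = x ∨ j = y then 0 else Φ.A1 i j) ∧
      (Φ'.Λ : Set (ℕ → F)) = maskOn (Φ.X.erase x) '' ↑Φ.Λ ∧
      (Φ'.Δ : Set (ℕ → F)) = maskOn Φ'.CY '' ↑Φ.Δ))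

/-- A single template operation, from Proposition 3.2 ((1)–(8)) and
Definition 3.3 ((10)–(12)). -/
def Step (Φ Φ' : FrameTemplate F) : Prop :=
  Op1 Φ Φ' ∨ Op2 Φ Φ' ∨ Op3 Φ Φ' ∨ Op4 Φ Φ' ∨ Op5 Φ Φ' ∨ Op6 Φ Φ' ∨ Op7 Φ Φ' ∨
    Op8 Φ Φ' ∨ Op10 Φ Φ' ∨ Op11 Φ Φ' ∨ Op12 Φ Φ'

/-- `Φ'` is a template minor of `Φ`: it is obtained from `Φ` by repeatedly performing
the operations (1)-(8) and (10)-(12). -/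
def IsTemplateMinor (Φ' Φ : FrameTemplate F) : Prop :=
  Relation.ReflTransGen Step Φ Φ'

/-- `M` weakly conforms to `Φ`: `M` virtually conforms to some template minor of `Φ`. -/
def WConforms (M : Matroid α) (Φ : FrameTemplate F) : Prop :=
  ∃ Φ'', IsTemplateMinor Φ'' Φ ∧ VConforms M Φ''

/-- The preorder on templates: `Φ ⪯ Φ'` iff every matroid weakly conforming to `Φ`
weakly conforms to `Φ'`, i.e. `𝓜_w(Φ) ⊆ 𝓜_w(Φ')`. -/
def Preceq (Φ Φ' : FrameTemplate F) : Prop :=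
  ∀ (α : Type) (M : Matroid α), WConforms M Φ → WConforms M Φ'

/-- Equivalence of templates: `𝓜_w(Φ) = 𝓜_w(Φ')`. -/
def TEquiv (Φ Φ' : FrameTemplate F) : Prop :=
  ∀ (α : Type) (M : Matroid α), WConforms M Φ ↔ WConforms M Φ'

/-- A binary frame template: a frame template over `GF(2)` with `Γ` trivial. -/
def IsBinaryT (Φ : FrameTemplate (ZMod 2)) : Prop := Φ.Γ = ⊥

end FrameTemplate

namespace FrameTemplate

lemma bot_smul_mem {F : Type} [Field F] (G : AddSubgroup (ℕ → F)) :
    ∀ γ ∈ (⊥ : Subgroup Fˣ), ∀ v ∈ G, (γ : F) • v ∈ G := by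
  intro γ hγ v hv
  rw [Subgroup.mem_bot] at hγ
  subst hγ
  simpa using hv

lemma bot_supp {F : Type} [Field F] (S : Finset ℕ) :
    ∀ v ∈ (⊥ : AddSubgroup (ℕ → F)), ∀ i ∉ S, v i = 0 := by
  intro v hv i _
  rw [AddSubgroup.mem_bot] at hv
  simp [hv]

lemma fullOn_supp {F : Type} [Field F] (S : Finset ℕ) :
    ∀ v ∈ fullOn F S, ∀ i ∉ S, v i = 0 := fun _ hv => hv

/-- The trivial template `Φ₀`: all groups trivial and all sets empty. -/
def Phi0 : FrameTemplate (ZMod 2) where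
  Γ := ⊥
  C := ∅
  X := ∅
  Y0 := ∅
  Y1 := ∅
  disj := by simp
  A1 := fun _ _ => 0
  A1_supp := by intro i j h; exact absurd rfl h
  Δ := ⊥
  Δ_supp := bot_supp _
  Δ_smul := bot_smul_mem _
  Λ := ⊥
  Λ_supp := bot_supp _
  Λ_smul := bot_smul_mem _

/-- The template `Φ_C`: all groups trivial and all sets empty except `|C| = 1` and
`Δ ≅ ℤ/2ℤ`. -/
def PhiC : FrameTemplate (ZMod 2) where
  Γ := ⊥
  C := {0}
  X := ∅
  Y0 := ∅
  Y1 := ∅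
  disj := by simp
  A1 := fun _ _ => 0
  A1_supp := by intro i j h; exact absurd rfl h
  Δ := fullOn (ZMod 2) {0}
  Δ_supp := by simpa using fullOn_supp (F := ZMod 2) {0}
  Δ_smul := bot_smul_mem _
  Λ := ⊥
  Λ_supp := bot_supp _
  Λ_smul := bot_smul_mem _

/-- The template `Φ_X`: all groups trivial and all sets empty except `|X| = 1` and
`Λ ≅ ℤ/2ℤ`. -/
def PhiX : FrameTemplate (ZMod 2) where
  Γ := ⊥
  C := ∅
  X := {0}
  Y0 := ∅
  Y1 := ∅
  disj := by simp
  A1 := fun _ _ => 0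
  A1_supp := by intro i j h; exact absurd rfl h
  Δ := ⊥
  Δ_supp := bot_supp _
  Δ_smul := bot_smul_mem _
  Λ := fullOn (ZMod 2) {0}
  Λ_supp := fullOn_supp _
  Λ_smul := bot_smul_mem _

/-- The template `Φ_{Y₀}`: all groups trivial and all sets empty except `|Y₀| = 1` and
`Δ ≅ ℤ/2ℤ`. -/
def PhiY0 : FrameTemplate (ZMod 2) where
  Γ := ⊥
  C := ∅
  X := ∅
  Y0 := {0}
  Y1 := ∅
  disj := by simp
  A1 := fun _ _ => 0
  A1_supp := by intro i j h; exact absurd rfl h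
  Δ := fullOn (ZMod 2) {0}
  Δ_supp := by simpa using fullOn_supp (F := ZMod 2) {0}
  Δ_smul := bot_smul_mem _
  Λ := ⊥
  Λ_supp := bot_supp _
  Λ_smul := bot_smul_mem _

/-- The template `Φ_{CX}`: `Y₀ = Y₁ = ∅`, `|C| = |X| = 1`, `Δ ≅ Λ ≅ ℤ/2ℤ`, `Γ` trivial,
and `A₁ = [1]`. -/
def PhiCX : FrameTemplate (ZMod 2) where
  Γ := ⊥
  C := {0}
  X := {1}
  Y0 := ∅
  Y1 := ∅
  disj := by simp
  A1 := fun i j => if i = 1 ∧ j = 0 then 1 else 0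
  A1_supp := by
    intro i j h
    by_cases hc : i = 1 ∧ j = 0
    · obtain ⟨hi, hj⟩ := hc
      subst hi; subst hj
      simp
    · simp [hc] at h
  Δ := fullOn (ZMod 2) {0}
  Δ_supp := by simpa using fullOn_supp (F := ZMod 2) {0}
  Δ_smul := bot_smul_mem _
  Λ := fullOn (ZMod 2) {1}
  Λ_supp := fullOn_supp _
  Λ_smul := bot_smul_mem _

/-- The template `Φ_{Y₁}`: all groups trivial, `C = Y₀ = ∅`, `|Y₁| = 3`, `|X| = 2`, and
`A₁ = [[1,0,1],[0,1,1]]` (rows `0, 1`; columns `2, 3, 4`). -/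
def PhiY1 : FrameTemplate (ZMod 2) where
  Γ := ⊥
  C := ∅
  X := {0, 1}
  Y0 := ∅
  Y1 := {2, 3, 4}
  disj := by simp [Finset.disjoint_left]
  A1 := fun i j =>
    if (i = 0 ∧ (j = 2 ∨ j = 4)) ∨ (i = 1 ∧ (j = 3 ∨ j = 4)) then 1 else 0
  A1_supp := by
    intro i j h
    by_cases hc : (i = 0 ∧ (j = 2 ∨ j = 4)) ∨ (i = 1 ∧ (j = 3 ∨ j = 4))
    · constructor
      · rcases hc with ⟨hi, _⟩ | ⟨hi, _⟩ <;> subst hi <;> simp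
      · rcases hc with ⟨_, hj | hj⟩ | ⟨_, hj | hj⟩ <;> subst hj <;> simp
    · simp [hc] at h
  Δ := ⊥
  Δ_supp := bot_supp _
  Δ_smul := bot_smul_mem _
  Λ := ⊥
  Λ_supp := bot_supp _
  Λ_smul := bot_smul_mem _

/-- A trivial template: one that is `⪯ Φ₀`. -/
def IsTrivialT (Φ : FrameTemplate (ZMod 2)) : Prop := Preceq Φ Phi0

variable {F : Type} [Field F]

/-- `Φ` is in standard form, with the witnessing partitions `C = C₀ ∪ C₁` and
`X = X₀ ∪ X₁`: `A₁[X₀, C₀]` is an identity matrix and `A₁[X₁, C]` is a zero matrix. -/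
def StandardFormOn (Φ : FrameTemplate F) (C0 C1 X0 X1 : Finset ℕ) : Prop :=
  Φ.C = C0 ∪ C1 ∧ Disjoint C0 C1 ∧ Φ.X = X0 ∪ X1 ∧ Disjoint X0 X1 ∧
  (∃ g : ℕ → ℕ, Set.BijOn g ↑X0 ↑C0 ∧
    ∀ x ∈ X0, ∀ c ∈ C0, Φ.A1 x c = if g x = c then 1 else 0) ∧
  (∀ x ∈ X1, ∀ c ∈ Φ.C, Φ.A1 x c = 0)

/-- `Φ` is in standard form. -/
def StandardForm (Φ : FrameTemplate F) : Prop :=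
  ∃ C0 C1 X0 X1, StandardFormOn Φ C0 C1 X0 X1

end FrameTemplate

open FrameTemplate

section BasicHelpers

lemma zmod2_cases (x : ZMod 2) : x = 0 ∨ x = 1 := by revert x; decide

lemma zmod2_ne_zero {x : ZMod 2} (h : x ≠ 0) : x = 1 :=
  (zmod2_cases x).resolve_left h

variable {F : Type} [Field F]

lemma maskOn_empty (v : ℕ → F) : maskOn (∅ : Finset ℕ) v = 0 := by
  funext i; simp [maskOn]

lemma maskOn_zero (S : Finset ℕ) : maskOn S (0 : ℕ → F) = 0 := by
  funext i; simp [maskOn]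

lemma maskOn_mem_fullOn (S : Finset ℕ) (v : ℕ → F) : maskOn S v ∈ fullOn F S := by
  intro i hi
  simp [maskOn, hi]

lemma image_maskOn_bot (S : Finset ℕ) :
    maskOn S '' ((⊥ : AddSubgroup (ℕ → F)) : Set (ℕ → F)) = {0} := by
  rw [AddSubgroup.coe_bot, Set.image_singleton, maskOn_zero]

/-- Two frame templates with the same data are equal. -/
lemma FrameTemplate.ext' {Φ Φ' : FrameTemplate F} (hΓ : Φ.Γ = Φ'.Γ) (hC : Φ.C = Φ'.C)
    (hX : Φ.X = Φ'.X) (hY0 : Φ.Y0 = Φ'.Y0) (hY1 : Φ.Y1 = Φ'.Y1) (hA1 : Φ.A1 = Φ'.A1)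
    (hΔ : Φ.Δ = Φ'.Δ) (hΛ : Φ.Λ = Φ'.Λ) : Φ = Φ' := by
  cases Φ; cases Φ'
  simp only at hΓ hC hX hY0 hY1 hA1 hΔ hΛ
  subst hΓ hC hX hY0 hY1 hA1 hΔ hΛ
  rfl

end BasicHelpers

section FrameCols

/-- Over `GF(2)` with trivial group, a column is a frame column iff its nonzero
entries (within `S`) are confined to two positions. -/
lemma isFrameColOn_of_pair {S : Set ℕ} {v : ℕ → ZMod 2} {b₁ b₂ : ℕ}
    (h : ∀ b ∈ S, v b ≠ 0 → b = b₁ ∨ b = b₂) :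
    IsFrameColOn (⊥ : Subgroup (ZMod 2)ˣ) S v := by
  classical
  by_cases h1 : b₁ ∈ S ∧ v b₁ ≠ 0
  · by_cases h2 : b₂ ∈ S ∧ v b₂ ≠ 0
    · by_cases hbb : b₁ = b₂
      · subst hbb
        refine Or.inr (Or.inl ⟨b₁, h1.1, zmod2_ne_zero h1.2, ?_⟩)
        intro b hb hne
        by_contra hnz
        rcases h b hb hnz with rfl | rfl <;> exact hne rfl
      · refine Or.inr (Or.inr ⟨b₁, h1.1, b₂, h2.1, hbb, zmod2_ne_zero h1.2, ⟨1, one_mem _, ?_⟩, ?_⟩)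
        · rw [zmod2_ne_zero h2.2]; decide
        · intro b hb hne1 hne2
          by_contra hnz
          rcases h b hb hnz with rfl | rfl
          · exact hne1 rfl
          · exact hne2 rfl
    · refine Or.inr (Or.inl ⟨b₁, h1.1, zmod2_ne_zero h1.2, ?_⟩)
      intro b hb hne
      by_contra hnz
      rcases h b hb hnz with rfl | rfl
      · exact hne rfl
      · exact h2 ⟨hb, hnz⟩
  · by_cases h2 : b₂ ∈ S ∧ v b₂ ≠ 0
    · refine Or.inr (Or.inl ⟨b₂, h2.1, zmod2_ne_zero h2.2, ?_⟩)
      intro b hb hne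
      by_contra hnz
      rcases h b hb hnz with rfl | rfl
      · exact h1 ⟨hb, hnz⟩
      · exact hne rfl
    · refine Or.inl ?_
      intro b hb
      by_contra hnz
      rcases h b hb hnz with rfl | rfl
      · exact h1 ⟨hb, hnz⟩
      · exact h2 ⟨hb, hnz⟩

lemma IsFrameColOn.pair {F : Type} [Field F] {Γ : Subgroup Fˣ} {S : Set ℕ} {v : ℕ → F}
    (h : IsFrameColOn Γ S v) :
    ∃ b₁ b₂, ∀ b ∈ S, v b ≠ 0 → b = b₁ ∨ b = b₂ := by
  rcases h with h | ⟨b, _, _, h⟩ | ⟨b₁, _, b₂, _, _, _, _, h⟩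
  · exact ⟨0, 0, fun b hb hnz => absurd (h b hb) hnz⟩
  · refine ⟨b, b, fun b' hb' hnz => ?_⟩
    by_contra hne
    push_neg at hne
    exact hnz (h b' hb' hne.1)
  · refine ⟨b₁, b₂, fun b hb hnz => ?_⟩
    by_contra hne
    push_neg at hne
    exact hnz (h b hb hne.1 hne.2)

end FrameCols
section LinAlgHelpers

variable {F : Type} [Field F]

/-- Reindexing rows by an equivalence preserves linear independence of columns. -/
lemma linIndep_rows_equiv (σ : ℕ ≃ ℕ) {ι : Type*} (v : ι → ℕ → F) :
    LinearIndependent F (fun x => (v x) ∘ σ) ↔ LinearIndependent F v := by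
  constructor
  · intro h
    refine LinearIndependent.of_comp (LinearMap.funLeft F F σ) ?_
    have he : (LinearMap.funLeft F F σ) ∘ v = fun x => (v x) ∘ σ := by
      funext x; rfl
    rwa [he]
  · intro h
    refine LinearIndependent.of_comp (LinearMap.funLeft F F σ.symm) ?_
    have he : (LinearMap.funLeft F F σ.symm) ∘ (fun x => (v x) ∘ σ) = v := by
      funext x; funext i
      simp [LinearMap.funLeft_apply, Function.comp_apply]
    rwa [he]

/-- The key "contraction" lemma: adjoining a vector with a private nonzero
coordinate `r`, linear independence of the enlarged family is the same as linear
independence of the family with the `z`-column cleared out of every column. -/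
lemma linearIndependent_insert_elim {S : Set ℕ} (hS : S.Finite) {z : ℕ} (hz : z ∉ S)
    (col : ℕ → ℕ → F) {r : ℕ} (hr : col z r = 1) :
    (LinearIndependent F fun x : ↥(insert z S) => col ↑x) ↔
      LinearIndependent F fun x : ↥S => col ↑x - (col ↑x r) • col z := by
  classical
  haveI : Fintype ↥S := hS.fintype
  set T : (ℕ → F) →ₗ[F] (ℕ → F) :=
    LinearMap.id - (LinearMap.proj r).smulRight (col z) with hTdef
  have hTapp : ∀ v : ℕ → F, T v = v - v r • col z := by
    intro v; simp [hTdef, LinearMap.smulRight_apply]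
  have key := linearIndepOn_insert (K := F) (f := col) hz
  unfold LinearIndepOn at key
  rw [key]
  have hsum : ∀ c : ↥S → F,
      (∑ x : ↥S, c x • (col ↑x - (col ↑x r) • col z)) =
        (∑ x : ↥S, c x • col ↑x) - (∑ x : ↥S, c x * col ↑x r) • col z := by
    intro c
    simp only [smul_sub, smul_smul]
    rw [Finset.sum_sub_distrib, Finset.sum_smul]
  constructor
  · rintro ⟨h1, h2⟩
    rw [Fintype.linearIndependent_iff]
    intro c hc
    rw [hsum] at hc
    set s := ∑ x : ↥S, c x * col ↑x r with hsdef
    by_cases hs : s = 0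
    · rw [hs, zero_smul, sub_zero] at hc
      exact Fintype.linearIndependent_iff.mp h1 c hc
    · exfalso
      apply h2
      rw [Set.image_eq_range, Submodule.mem_span_range_iff_exists_fun]
      refine ⟨fun x => s⁻¹ * c x, ?_⟩
      have h3 : ∑ x : ↥S, c x • col ↑x = s • col z := by
        rwa [sub_eq_zero] at hc
      calc ∑ x : ↥S, (s⁻¹ * c x) • col ↑x
          = s⁻¹ • ∑ x : ↥S, c x • col ↑x := by
            rw [Finset.smul_sum]
            refine Finset.sum_congr rfl fun x _ => ?_
            rw [smul_smul]
        _ = col z := by rw [h3, smul_smul, inv_mul_cancel₀ hs, one_smul]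
  · intro hu
    have h1 : LinearIndependent F fun x : ↥S => col ↑x := by
      refine LinearIndependent.of_comp T ?_
      have he : T ∘ (fun x : ↥S => col ↑x) =
          fun x : ↥S => col ↑x - (col ↑x r) • col z := by
        funext x; rw [Function.comp_apply, hTapp]
      rwa [he]
    refine ⟨h1, fun hmem => ?_⟩
    rw [Set.image_eq_range, Submodule.mem_span_range_iff_exists_fun] at hmem
    obtain ⟨c, hc⟩ := hmem
    have hT0 : T (col z) = 0 := by rw [hTapp, hr, one_smul, sub_self]
    have hTc : ∑ x : ↥S, c x • (col ↑x - (col ↑x r) • col z) = 0 := by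
      have := congrArg T hc
      rw [map_sum, hT0] at this
      rw [← this]
      refine Finset.sum_congr rfl fun x _ => ?_
      rw [map_smul, hTapp]
    have hc0 : ∀ x, c x = 0 := Fintype.linearIndependent_iff.mp hu c hTc
    have : col z = 0 := by
      rw [← hc]
      refine Finset.sum_eq_zero fun x _ => ?_
      rw [hc0 x, zero_smul]
    have := congrFun this r
    rw [hr] at this
    exact one_ne_zero this

/-- Column matroids exist. -/
lemma exists_isColMatroidOf (E : Finset ℕ) (A : ℕ → ℕ → F) :
    ∃ N : Matroid ℕ, IsColMatroidOf N E A := by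
  classical
  set col : ℕ → (ℕ → F) := fun j i => A i j with hcol
  set Ind : Set ℕ → Prop :=
    fun I => I ⊆ ↑E ∧ LinearIndependent F (fun e : I => col ↑e) with hInd
  have ind_subset : ∀ ⦃I J : Set ℕ⦄, Ind J → I ⊆ J → Ind I := by
    intro I J hJ hIJ
    refine ⟨hIJ.trans hJ.1, ?_⟩
    have := hJ.2.comp (Set.inclusion hIJ) (Set.inclusion_injective hIJ)
    exact this
  have ind_aug : ∀ ⦃I J : Set ℕ⦄, Ind I → Ind J → I.ncard < J.ncard →
      ∃ e ∈ J, e ∉ I ∧ Ind (insert e I) := by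
    intro I J hI hJ hlt
    by_contra hcon
    push_neg at hcon
    have hIfin : I.Finite := E.finite_toSet.subset hI.1
    have hJfin : J.Finite := E.finite_toSet.subset hJ.1
    haveI : Fintype ↥(col '' I) := (hIfin.image col).fintype
    haveI : Fintype ↥(col '' J) := (hJfin.image col).fintype
    have hmem : ∀ e ∈ J, col e ∈ Submodule.span F (col '' I) := by
      intro e he
      by_cases heI : e ∈ I
      · exact Submodule.subset_span (Set.mem_image_of_mem _ heI)
      · by_contra hspan
        refine hcon e he heI ⟨Set.insert_subset (hJ.1 he) hI.1, ?_⟩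
        exact (linearIndepOn_insert heI).mpr ⟨hI.2, hspan⟩
    have hle : Submodule.span F (col '' J) ≤ Submodule.span F (col '' I) := by
      rw [Submodule.span_le]
      rintro _ ⟨e, he, rfl⟩
      exact hmem e he
    haveI : FiniteDimensional F (Submodule.span F (col '' I)) :=
      FiniteDimensional.span_of_finite F (hIfin.image col)
    have hJinj : Set.InjOn col J := by
      rw [Set.injOn_iff_injective]
      exact hJ.2.injective
    have h1 : J.ncard = (col '' J).ncard := (Set.ncard_image_of_injOn hJinj).symm
    have hJset : LinearIndependent F ((↑) : ↥(col '' J) → (ℕ → F)) := by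
      have := LinearIndepOn.image_of_comp (s := J) col id hJ.2
      exact this
    have h2 : (col '' J).ncard = Module.finrank F (Submodule.span F (col '' J)) := by
      rw [finrank_span_set_eq_card hJset, Set.ncard_eq_toFinset_card']
    have h3 : Module.finrank F (Submodule.span F (col '' J)) ≤
        Module.finrank F (Submodule.span F (col '' I)) :=
      Submodule.finrank_mono hle
    have h4 : Module.finrank F (Submodule.span F (col '' I)) ≤ (col '' I).ncard := by
      have := finrank_span_le_card (R := F) (col '' I)
      rwa [Set.ncard_eq_toFinset_card']
    have h5 : (col '' I).ncard ≤ I.ncard := Set.ncard_image_le hIfin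
    omega
  refine ⟨(IndepMatroid.ofFinite E.finite_toSet Ind ?_ ind_subset ind_aug ?_).matroid, ?_, ?_⟩
  · exact ⟨Set.empty_subset _, linearIndependent_empty_type⟩
  · exact fun I hI => hI.1
  · rfl
  · intro I
    simp only [IndepMatroid.matroid_indep_iff, IndepMatroid.ofFinite_indep]
    exact Iff.rfl

end LinAlgHelpers
section MatroidGlue

variable {F : Type} [Field F]

lemma restrict_diff_empty (N : Matroid ℕ) : N ↾ (N.E \ ↑(∅ : Finset ℕ)) = N := by
  simp

lemma isContraction_self_empty (N : Matroid ℕ) : IsContraction N N (∅ : Set ℕ) := by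
  refine ⟨by simp, fun I => ?_⟩
  constructor
  · intro hI
    refine ⟨by simpa using hI.subset_ground, ∅, ?_, by rwa [Set.union_empty]⟩
    rw [Set.empty_inter]
    exact N.empty_indep.isBasis_self
  · rintro ⟨hIE, J, hJ, hIJ⟩
    rw [Set.empty_inter] at hJ
    have : J = ∅ := Set.subset_empty_iff.mp hJ.subset
    subst this
    rwa [Set.union_empty] at hIJ

lemma isContraction_unique {N₁ N₂ N : Matroid ℕ} {K : Set ℕ}
    (h1 : IsContraction N₁ N K) (h2 : IsContraction N₂ N K) : N₁ = N₂ :=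
  Matroid.ext_indep (h1.1.trans h2.1.symm)
    (fun ⦃I⦄ _ => (h1.2 I).trans (h2.2 I).symm)

lemma IsColMatroidOf.indep_singleton {N : Matroid ℕ} {E : Finset ℕ} {A : ℕ → ℕ → F}
    (h : IsColMatroidOf N E A) {z : ℕ} (hz : z ∈ E) {r : ℕ} (hnz : A r z ≠ 0) :
    N.Indep {z} := by
  refine (h.2 {z}).mpr ⟨by simpa using hz, ?_⟩
  haveI : Unique ↥({z} : Set ℕ) := Set.uniqueSingleton z
  rw [linearIndependent_unique_iff]
  intro h0
  have hd : ((default : ↥({z} : Set ℕ)) : ℕ) = z := (default : ↥({z} : Set ℕ)).2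
  rw [hd] at h0
  exact hnz (congrFun h0 r)

/-- Restricting a column matroid (zeroing out the removed columns). -/
lemma IsColMatroidOf.restrict {N : Matroid ℕ} {E : Finset ℕ} {A : ℕ → ℕ → F}
    (h : IsColMatroidOf N E A) (D : Finset ℕ) [DecidablePred (· ∈ D)] :
    IsColMatroidOf (N ↾ (N.E \ ↑D)) (E \ D) (fun i j => if j ∈ D then 0 else A i j) := by
  constructor
  · rw [Matroid.restrict_ground_eq, h.1, Finset.coe_sdiff]
  · intro I
    rw [Matroid.restrict_indep_iff, h.2 I, h.1, Finset.coe_sdiff]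
    have key : I ⊆ ↑E \ ↑D →
        ((fun e : I => fun i => if (e : ℕ) ∈ D then (0 : F) else A i e) =
          fun e : I => fun i => A i e) := by
      intro hID
      funext e
      have hnot : (e : ℕ) ∉ D := by
        have := (hID e.2).2
        simpa using this
      simp [hnot]
    constructor
    · rintro ⟨⟨hIE, hlin⟩, hID⟩
      rw [key hID]
      exact ⟨hID, hlin⟩
    · rintro ⟨hID, hlin⟩
      rw [key hID] at hlin
      exact ⟨⟨fun x hx => (hID hx).1, hlin⟩, hID⟩

/-- Contract one column `z` (having a private nonzero row `r`) from a column
matroid: the result is the column matroid where column `z` has been cleared out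
of all other columns. -/
lemma exists_contraction_point {N' : Matroid ℕ} {E'' : Finset ℕ} {Ah : ℕ → ℕ → F}
    (h : IsColMatroidOf N' E'' Ah) {z r : ℕ} (hz : z ∈ E'') (hr : Ah r z = 1) :
    ∃ N₁ : Matroid ℕ, IsContraction N₁ N' {z} ∧
      IsColMatroidOf N₁ (E''.erase z) (fun i j => Ah i j - Ah r j * Ah i z) := by
  classical
  obtain ⟨N₁, hN₁⟩ := exists_isColMatroidOf (E''.erase z) (fun i j => Ah i j - Ah r j * Ah i z)
  have hzE : ({z} : Set ℕ) ∩ N'.E = {z} := by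
    rw [h.1]
    exact Set.inter_eq_self_of_subset_left (by simpa using hz)
  have hzind : N'.Indep {z} := h.indep_singleton hz (by rw [hr]; exact one_ne_zero)
  have hmaster : ∀ I : Set ℕ, I ⊆ ↑(E''.erase z) →
      ((LinearIndependent F fun x : ↥(insert z I) => fun i => Ah i ↑x) ↔
        LinearIndependent F fun x : ↥I => fun i => Ah i ↑x - Ah r ↑x * Ah i z) := by
    intro I hI
    have hzI : z ∉ I := fun hzI => by simpa using hI hzI
    have hfin : I.Finite := ((E''.erase z).finite_toSet).subset hI
    have heq := linearIndependent_insert_elim (F := F) hfin hzI (fun j i => Ah i j) (r := r) hr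
    have hfam : (fun x : ↥I => (fun i => Ah i ↑x) - (Ah r ↑x) • fun i => Ah i z) =
        fun x : ↥I => fun i => Ah i ↑x - Ah r ↑x * Ah i z := by
      funext x
      funext i
      simp [smul_eq_mul]
    rw [hfam] at heq
    exact heq
  refine ⟨N₁, ⟨?_, ?_⟩, hN₁⟩
  · rw [hN₁.1, Finset.coe_erase, h.1]
  · intro I
    rw [hN₁.2 I]
    constructor
    · rintro ⟨hIE, hlin⟩
      have hIE' : I ⊆ N'.E \ {z} := by rw [h.1]; rwa [Finset.coe_erase] at hIE
      refine ⟨hIE', {z}, ?_, ?_⟩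
      · rw [hzE]
        exact hzind.isBasis_self
      · rw [h.2 (I ∪ {z})]
        have hzI : z ∉ I := fun hzI => by simpa using hIE hzI
        refine ⟨?_, ?_⟩
        · rw [Set.union_singleton]
          refine Set.insert_subset (by simpa using hz) ?_
          intro x hx
          have := hIE hx
          rw [Finset.coe_erase] at this
          exact this.1
        · rw [Set.union_singleton]
          exact (hmaster I hIE).mpr hlin
    · rintro ⟨hIE, J, hJ, hIJ⟩
      rw [hzE] at hJ
      have hJz : J = {z} := by
        refine hJ.eq_of_subset_indep hzind hJ.subset Set.Subset.rfl
      subst hJz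
      have hIE' : I ⊆ ↑(E''.erase z) := by
        rw [Finset.coe_erase, ← h.1]
        exact hIE
      refine ⟨hIE', ?_⟩
      rw [Set.union_singleton] at hIJ
      rw [h.2 (insert z I)] at hIJ
      exact (hmaster I hIE').mp hIJ.2

/-- Transitivity for matroid isomorphism. -/
lemma MIso.trans {α β γ : Type*} {M : Matroid α} {N : Matroid β} {P : Matroid γ}
    (h1 : MIso M N) (h2 : MIso N P) : MIso M P := by
  obtain ⟨f, hf, hfi⟩ := h1
  obtain ⟨g, hg, hgi⟩ := h2
  refine ⟨g ∘ f, hg.comp hf, fun I hI => ?_⟩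
  rw [hfi I hI, hgi (f '' I) ((Set.mapsTo_iff_image_subset.mp hf.mapsTo).trans' (Set.image_mono hI)),
    Set.image_comp]

end MatroidGlue
section MinorChar

open FrameTemplate

/-- Invariant for template minors of `Φ_C`. -/
def GoodC (Φ : FrameTemplate (ZMod 2)) : Prop :=
  Φ.Γ = ⊥ ∧ Φ.X = ∅ ∧ Φ.Y0 = ∅ ∧ Φ.Y1 = ∅ ∧ Φ.C ⊆ {0}

/-- Invariant for template minors of `Φ_X`. -/
def GoodX (Φ : FrameTemplate (ZMod 2)) : Prop :=
  Φ.Γ = ⊥ ∧ Φ.C = ∅ ∧ Φ.Y0 = ∅ ∧ Φ.Y1 = ∅ ∧ Φ.X ⊆ {0}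

/-- Invariant for template minors of `Φ_{Y₀}`. -/
def GoodY0 (Φ : FrameTemplate (ZMod 2)) : Prop :=
  Φ.Γ = ⊥ ∧ Φ.C = ∅ ∧ Φ.X = ∅ ∧ Φ.Y1 = ∅ ∧ Φ.Y0 ⊆ {0}

/-- Invariant for template minors of `Φ_{Y₁}`. -/
def GoodY1 (Φ : FrameTemplate (ZMod 2)) : Prop :=
  Φ.Γ = ⊥ ∧ Φ.C = ∅ ∧ Φ.Y0 = ∅ ∧ Φ.X ⊆ {0, 1} ∧ Φ.Y1 ⊆ {2, 3, 4} ∧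
    Φ.Δ = ⊥ ∧ Φ.Λ = ⊥

lemma elemRowOp_zero {F : Type} [Field F] {X : Finset ℕ} {e : (ℕ → F) → ℕ → F}
    (he : ElemRowOp X e) : e 0 = 0 := by
  rcases he with ⟨x₁, _, x₂, _, _, he⟩ | ⟨x, _, c, _, he⟩ | ⟨x₁, _, x₂, _, _, c, he⟩ <;>
    subst he <;> funext i <;> simp

lemma goodC_step {Φ Φ' : FrameTemplate (ZMod 2)} (h : Step Φ Φ') (hG : GoodC Φ) :
    GoodC Φ' := by
  obtain ⟨hΓ, hX, hY0, hY1, hC⟩ := hG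
  rcases h with h | h | h | h | h | h | h | h | h | h | h
  · obtain ⟨hlt, -⟩ := h; rw [hΓ] at hlt; exact absurd hlt not_lt_bot
  · exact ⟨h.1.trans hΓ, h.2.2.1.trans hX, h.2.2.2.1.trans hY0, h.2.2.2.2.1.trans hY1,
      h.2.1 ▸ hC⟩
  · exact ⟨h.1.trans hΓ, h.2.2.1.trans hX, h.2.2.2.1.trans hY0, h.2.2.2.2.1.trans hY1,
      h.2.1 ▸ hC⟩
  · obtain ⟨y, hy, _⟩ := h
    rw [hY1] at hy; exact absurd hy (Finset.notMem_empty y)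
  · obtain ⟨e, he, hs⟩ := h
    exact ⟨hs.1.trans hΓ, hs.2.2.1.trans hX, hs.2.2.2.1.trans hY0, hs.2.2.2.2.1.trans hY1,
      hs.2.1 ▸ hC⟩
  · obtain ⟨x, hx, _⟩ := h
    rw [hX] at hx; exact absurd hx (Finset.notMem_empty x)
  · obtain ⟨c, hc, x, hx, _⟩ := h
    rw [hX] at hx; exact absurd hx (Finset.notMem_empty x)
  · obtain ⟨c, hc, _, _, hΓ', hC', hX', hY0', hY1', _⟩ := h
    refine ⟨hΓ' ▸ hΓ, hX' ▸ hX, hY0' ▸ hY0, hY1' ▸ hY1, ?_⟩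
    rw [hC']
    exact (Finset.erase_subset _ _).trans hC
  · obtain ⟨y, hy, _⟩ := h
    rw [hY0] at hy; exact absurd hy (Finset.notMem_empty y)
  · obtain ⟨y, hy, _⟩ := h
    rw [hY0] at hy; exact absurd hy (Finset.notMem_empty y)
  · obtain ⟨y, hy, _⟩ := h
    rw [hY0] at hy; exact absurd hy (Finset.notMem_empty y)

lemma goodX_step {Φ Φ' : FrameTemplate (ZMod 2)} (h : Step Φ Φ') (hG : GoodX Φ) :
    GoodX Φ' := by
  obtain ⟨hΓ, hC, hY0, hY1, hX⟩ := hG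
  rcases h with h | h | h | h | h | h | h | h | h | h | h
  · obtain ⟨hlt, -⟩ := h; rw [hΓ] at hlt; exact absurd hlt not_lt_bot
  · exact ⟨h.1.trans hΓ, h.2.1.trans hC, h.2.2.2.1.trans hY0, h.2.2.2.2.1.trans hY1,
      h.2.2.1 ▸ hX⟩
  · exact ⟨h.1.trans hΓ, h.2.1.trans hC, h.2.2.2.1.trans hY0, h.2.2.2.2.1.trans hY1,
      h.2.2.1 ▸ hX⟩
  · obtain ⟨y, hy, _⟩ := h
    rw [hY1] at hy; exact absurd hy (Finset.notMem_empty y)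
  · obtain ⟨e, he, hs⟩ := h
    exact ⟨hs.1.trans hΓ, hs.2.1.trans hC, hs.2.2.2.1.trans hY0, hs.2.2.2.2.1.trans hY1,
      hs.2.2.1 ▸ hX⟩
  · obtain ⟨x, hx, _, hΓ', hC', hX', hY0', hY1', _⟩ := h
    refine ⟨hΓ' ▸ hΓ, hC' ▸ hC, hY0' ▸ hY0, hY1' ▸ hY1, ?_⟩
    rw [hX']
    exact (Finset.erase_subset _ _).trans hX
  · obtain ⟨c, hc, _⟩ := h
    rw [hC] at hc; exact absurd hc (Finset.notMem_empty c)
  · obtain ⟨c, hc, _⟩ := h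
    rw [hC] at hc; exact absurd hc (Finset.notMem_empty c)
  · obtain ⟨y, hy, _⟩ := h
    rw [hY0] at hy; exact absurd hy (Finset.notMem_empty y)
  · obtain ⟨y, hy, _⟩ := h
    rw [hY0] at hy; exact absurd hy (Finset.notMem_empty y)
  · obtain ⟨y, hy, _⟩ := h
    rw [hY0] at hy; exact absurd hy (Finset.notMem_empty y)

lemma goodY0_step {Φ Φ' : FrameTemplate (ZMod 2)} (h : Step Φ Φ') (hG : GoodY0 Φ) :
    GoodY0 Φ' := by
  obtain ⟨hΓ, hC, hX, hY1, hY0⟩ := hG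
  rcases h with h | h | h | h | h | h | h | h | h | h | h
  · obtain ⟨hlt, -⟩ := h; rw [hΓ] at hlt; exact absurd hlt not_lt_bot
  · exact ⟨h.1.trans hΓ, h.2.1.trans hC, h.2.2.1.trans hX, h.2.2.2.2.1.trans hY1,
      h.2.2.2.1 ▸ hY0⟩
  · exact ⟨h.1.trans hΓ, h.2.1.trans hC, h.2.2.1.trans hX, h.2.2.2.2.1.trans hY1,
      h.2.2.2.1 ▸ hY0⟩
  · obtain ⟨y, hy, _⟩ := h
    rw [hY1] at hy; exact absurd hy (Finset.notMem_empty y)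
  · obtain ⟨e, he, hs⟩ := h
    exact ⟨hs.1.trans hΓ, hs.2.1.trans hC, hs.2.2.1.trans hX, hs.2.2.2.2.1.trans hY1,
      hs.2.2.2.1 ▸ hY0⟩
  · obtain ⟨x, hx, _⟩ := h
    rw [hX] at hx; exact absurd hx (Finset.notMem_empty x)
  · obtain ⟨c, hc, _⟩ := h
    rw [hC] at hc; exact absurd hc (Finset.notMem_empty c)
  · obtain ⟨c, hc, _⟩ := h
    rw [hC] at hc; exact absurd hc (Finset.notMem_empty c)
  · obtain ⟨y, hy, hΓ', hC', hX', hY0', hY1', _⟩ := h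
    refine ⟨hΓ' ▸ hΓ, hC' ▸ hC, hX' ▸ hX, hY1' ▸ hY1, ?_⟩
    rw [hY0']
    exact (Finset.erase_subset _ _).trans hY0
  · obtain ⟨y, hy, x, hx, _⟩ := h
    rw [hX] at hx; exact absurd hx (Finset.notMem_empty x)
  · obtain ⟨y, hy, hΔ0, h⟩ := h
    rcases h with ⟨_, hΓ', hC', hX', hY0', hY1', _⟩ | ⟨x, hx, _⟩
    · refine ⟨hΓ' ▸ hΓ, hC' ▸ hC, hX' ▸ hX, hY1' ▸ hY1, ?_⟩
      rw [hY0']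
      exact (Finset.erase_subset _ _).trans hY0
    · rw [hX] at hx; exact absurd hx (Finset.notMem_empty x)

lemma goodY1_step {Φ Φ' : FrameTemplate (ZMod 2)} (h : Step Φ Φ') (hG : GoodY1 Φ) :
    GoodY1 Φ' := by
  obtain ⟨hΓ, hC, hY0, hX, hY1, hΔ, hΛ⟩ := hG
  rcases h with h | h | h | h | h | h | h | h | h | h | h
  · obtain ⟨hlt, -⟩ := h; rw [hΓ] at hlt; exact absurd hlt not_lt_bot
  · obtain ⟨-, -, -, -, -, -, -, hlt⟩ := h; rw [hΛ] at hlt; exact absurd hlt not_lt_bot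
  · obtain ⟨-, -, -, -, -, -, hlt, -⟩ := h; rw [hΔ] at hlt; exact absurd hlt not_lt_bot
  · obtain ⟨y, hy, hΓ', hC', hX', hY0', hY1', hA1', hΔ', hΛ'⟩ := h
    refine ⟨hΓ'.trans hΓ, hC'.trans hC, hY0'.trans hY0, hX' ▸ hX, ?_, ?_, hΛ'.trans hΛ⟩
    · rw [hY1']
      exact (Finset.erase_subset _ _).trans hY1
    · refine SetLike.coe_injective ?_
      rw [hΔ', hΔ, image_maskOn_bot, AddSubgroup.coe_bot]
  · obtain ⟨e, he, hΓ', hC', hX', hY0', hY1', hA1', hΔ', hΛ'⟩ := h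
    refine ⟨hΓ'.trans hΓ, hC'.trans hC, hY0'.trans hY0, hX' ▸ hX, hY1' ▸ hY1,
      hΔ'.trans hΔ, ?_⟩
    refine SetLike.coe_injective ?_
    rw [hΛ', hΛ, AddSubgroup.coe_bot, Set.image_singleton, elemRowOp_zero he]
  · obtain ⟨x, hx, _, hΓ', hC', hX', hY0', hY1', hA1', hΔ', hΛ'⟩ := h
    refine ⟨hΓ'.trans hΓ, hC'.trans hC, hY0'.trans hY0, ?_, hY1' ▸ hY1, hΔ'.trans hΔ, ?_⟩
    · rw [hX']
      exact (Finset.erase_subset _ _).trans hX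
    · refine SetLike.coe_injective ?_
      rw [hΛ', hΛ, image_maskOn_bot, AddSubgroup.coe_bot]
  · obtain ⟨c, hc, _⟩ := h
    rw [hC] at hc; exact absurd hc (Finset.notMem_empty c)
  · obtain ⟨c, hc, _⟩ := h
    rw [hC] at hc; exact absurd hc (Finset.notMem_empty c)
  · obtain ⟨y, hy, _⟩ := h
    rw [hY0] at hy; exact absurd hy (Finset.notMem_empty y)
  · obtain ⟨y, hy, _⟩ := h
    rw [hY0] at hy; exact absurd hy (Finset.notMem_empty y)
  · obtain ⟨y, hy, _⟩ := h
    rw [hY0] at hy; exact absurd hy (Finset.notMem_empty y)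

lemma goodC_of_minor {Φ : FrameTemplate (ZMod 2)} (h : IsTemplateMinor Φ PhiC) :
    GoodC Φ := by
  induction h with
  | refl => exact ⟨rfl, rfl, rfl, rfl, Finset.Subset.refl _⟩
  | tail _ hstep ih => exact goodC_step hstep ih

lemma goodX_of_minor {Φ : FrameTemplate (ZMod 2)} (h : IsTemplateMinor Φ PhiX) :
    GoodX Φ := by
  induction h with
  | refl => exact ⟨rfl, rfl, rfl, rfl, Finset.Subset.refl _⟩
  | tail _ hstep ih => exact goodX_step hstep ih

lemma goodY0_of_minor {Φ : FrameTemplate (ZMod 2)} (h : IsTemplateMinor Φ PhiY0) :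
    GoodY0 Φ := by
  induction h with
  | refl => exact ⟨rfl, rfl, rfl, rfl, Finset.Subset.refl _⟩
  | tail _ hstep ih => exact goodY0_step hstep ih

lemma goodY1_of_minor {Φ : FrameTemplate (ZMod 2)} (h : IsTemplateMinor Φ PhiY1) :
    GoodY1 Φ := by
  induction h with
  | refl => exact ⟨rfl, rfl, rfl, Finset.Subset.refl _, Finset.Subset.refl _, rfl, rfl⟩
  | tail _ hstep ih => exact goodY1_step hstep ih

end MinorChar
section Phi0Chains

open FrameTemplate

lemma image_maskOn_empty_of_nonempty {F : Type} [Field F] {T : Set (ℕ → F)}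
    (hT : T.Nonempty) : maskOn (∅ : Finset ℕ) '' T = {0} := by
  ext x
  constructor
  · rintro ⟨w, -, rfl⟩
    simp [maskOn_empty]
  · rintro rfl
    exact ⟨hT.choose, hT.choose_spec, maskOn_empty _⟩

lemma bot_lt_fullOn (a : ℕ) : (⊥ : AddSubgroup (ℕ → ZMod 2)) < fullOn (ZMod 2) {a} := by
  refine lt_of_le_of_ne bot_le ?_
  intro h
  have hmem : (fun i => if i = a then (1 : ZMod 2) else 0) ∈ fullOn (ZMod 2) {a} := by
    intro i hi
    have hne : i ≠ a := by simpa using hi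
    simp [hne]
  rw [← h, AddSubgroup.mem_bot] at hmem
  have := congrFun hmem a
  simp at this

/-- `Φ_C` with `Δ` replaced by the trivial group. -/
def PhiCbot : FrameTemplate (ZMod 2) where
  Γ := ⊥
  C := {0}
  X := ∅
  Y0 := ∅
  Y1 := ∅
  disj := by simp
  A1 := fun _ _ => 0
  A1_supp := by intro i j h; exact absurd rfl h
  Δ := ⊥
  Δ_supp := bot_supp _
  Δ_smul := bot_smul_mem _
  Λ := ⊥
  Λ_supp := bot_supp _
  Λ_smul := bot_smul_mem _

/-- `Φ_X` with `Λ` replaced by the trivial group. -/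
def PhiXbot : FrameTemplate (ZMod 2) where
  Γ := ⊥
  C := ∅
  X := {0}
  Y0 := ∅
  Y1 := ∅
  disj := by simp
  A1 := fun _ _ => 0
  A1_supp := by intro i j h; exact absurd rfl h
  Δ := ⊥
  Δ_supp := bot_supp _
  Δ_smul := bot_smul_mem _
  Λ := ⊥
  Λ_supp := bot_supp _
  Λ_smul := bot_smul_mem _

/-- `Φ_{CX}` with `Λ` replaced by the trivial group. -/
def PhiCX1 : FrameTemplate (ZMod 2) where
  Γ := ⊥
  C := {0}
  X := {1}
  Y0 := ∅
  Y1 := ∅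
  disj := by simp
  A1 := fun i j => if i = 1 ∧ j = 0 then 1 else 0
  A1_supp := by
    intro i j h
    by_cases hc : i = 1 ∧ j = 0
    · obtain ⟨hi, hj⟩ := hc
      subst hi; subst hj
      simp
    · simp [hc] at h
  Δ := fullOn (ZMod 2) {0}
  Δ_supp := by simpa using fullOn_supp (F := ZMod 2) {0}
  Δ_smul := bot_smul_mem _
  Λ := ⊥
  Λ_supp := bot_supp _
  Λ_smul := bot_smul_mem _

lemma phi0_CY : Phi0.CY = ∅ := by simp [FrameTemplate.CY, Phi0]

lemma minor_phi0_phiC : IsTemplateMinor Phi0 PhiC := by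
  have step1 : Step PhiC PhiCbot := by
    refine Or.inr (Or.inr (Or.inl ?_))
    exact ⟨rfl, rfl, rfl, rfl, rfl, rfl, bot_lt_fullOn 0, rfl⟩
  have step2 : Step PhiCbot Phi0 := by
    refine Or.inr (Or.inr (Or.inr (Or.inr (Or.inr (Or.inr (Or.inr (Or.inl ?_)))))))
    refine ⟨0, Finset.mem_singleton_self 0, fun i => rfl, ?_, rfl,
      (Finset.erase_singleton 0).symm, rfl, rfl, rfl, rfl, ?_, rfl⟩
    · intro v hv
      rw [show PhiCbot.Δ = ⊥ from rfl, AddSubgroup.mem_bot] at hv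
      simp [hv]
    · rw [phi0_CY]
      show ((⊥ : AddSubgroup (ℕ → ZMod 2)) : Set (ℕ → ZMod 2)) =
        maskOn ∅ '' ((⊥ : AddSubgroup (ℕ → ZMod 2)) : Set (ℕ → ZMod 2))
      rw [image_maskOn_bot, AddSubgroup.coe_bot]
  exact (Relation.ReflTransGen.single step1).tail step2

lemma minor_phi0_phiX : IsTemplateMinor Phi0 PhiX := by
  have step1 : Step PhiX PhiXbot := by
    refine Or.inr (Or.inl ?_)
    exact ⟨rfl, rfl, rfl, rfl, rfl, rfl, rfl, bot_lt_fullOn 0⟩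
  have step2 : Step PhiXbot Phi0 := by
    refine Or.inr (Or.inr (Or.inr (Or.inr (Or.inr (Or.inl ?_)))))
    refine ⟨0, Finset.mem_singleton_self 0, ?_, rfl, rfl,
      (Finset.erase_singleton 0).symm, rfl, rfl, ?_, rfl, ?_⟩
    · intro B E Z A' hresp j
      obtain ⟨hXB, hCYE, hZE, hdisj, hsupp, hA1, hXZ, hZcol, hframe, hLam, hDel⟩ := hresp
      by_cases hjE : j ∈ E
      · by_cases hjZ : j ∈ Z
        · exact hXZ 0 (Finset.mem_singleton_self 0) j hjZ
        · have hjCY : j ∉ PhiXbot.CY := by simp [FrameTemplate.CY, PhiXbot]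
          have hmem := hLam j hjE hjCY hjZ
          have hbot : PhiXbot.Λ = ⊥ := rfl
          rw [hbot, AddSubgroup.mem_bot] at hmem
          have := congrFun hmem 0
          simpa [maskOn, PhiXbot] using this
      · by_contra hne
        exact hjE (hsupp 0 j hne).2
    · funext i j
      simp [Phi0, PhiXbot]
    · show ((⊥ : AddSubgroup (ℕ → ZMod 2)) : Set (ℕ → ZMod 2)) =
        maskOn (PhiXbot.X.erase 0) '' ((⊥ : AddSubgroup (ℕ → ZMod 2)) : Set (ℕ → ZMod 2))
      rw [image_maskOn_bot, AddSubgroup.coe_bot]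
  exact (Relation.ReflTransGen.single step1).tail step2

lemma minor_phi0_phiCX : IsTemplateMinor Phi0 PhiCX := by
  have step1 : Step PhiCX PhiCX1 := by
    refine Or.inr (Or.inl ?_)
    exact ⟨rfl, rfl, rfl, rfl, rfl, rfl, rfl, bot_lt_fullOn 1⟩
  have step2 : Step PhiCX1 Phi0 := by
    refine Or.inr (Or.inr (Or.inr (Or.inr (Or.inr (Or.inr (Or.inl ?_))))))
    refine ⟨0, Finset.mem_singleton_self 0, 1, Finset.mem_singleton_self 1, ?_, ?_,
      Or.inl ?_, rfl, (Finset.erase_singleton 0).symm, (Finset.erase_singleton 1).symm,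
      rfl, rfl, ?_, ?_, ?_⟩
    · show (if (1 : ℕ) = 1 ∧ (0 : ℕ) = 0 then (1 : ZMod 2) else 0) = 1
      simp
    · intro i hi
      show (if i = 1 ∧ (0 : ℕ) = 0 then (1 : ZMod 2) else 0) = 0
      simp [hi]
    · intro v hv
      rw [show PhiCX1.Λ = ⊥ from rfl, AddSubgroup.mem_bot] at hv
      simp [hv]
    · funext i j
      by_cases h : i = 1 ∨ j = 0
      · simp [Phi0, h]
      · push_neg at h
        simp [Phi0, PhiCX1, h, h.1]
    · show ((⊥ : AddSubgroup (ℕ → ZMod 2)) : Set (ℕ → ZMod 2)) =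
        maskOn (PhiCX1.X.erase 1) '' ((⊥ : AddSubgroup (ℕ → ZMod 2)) : Set (ℕ → ZMod 2))
      rw [image_maskOn_bot, AddSubgroup.coe_bot]
    · rw [phi0_CY, show ((Phi0.Δ : Set (ℕ → ZMod 2))) = {0} from AddSubgroup.coe_bot]
      rw [image_maskOn_empty_of_nonempty]
      exact ⟨(fun v => v - v 0 • PhiCX1.A1 1) 0, Set.mem_image_of_mem _ (zero_mem _)⟩
  exact (Relation.ReflTransGen.single step1).tail step2

end Phi0Chains
section ShiftContract

/-- Shift the columns of a represented matroid by one, adjoin a column `0` with a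
private nonzero row `r`, and contract it.  If clearing column `0` out of the shifted
columns recovers the original columns, the resulting matroid is isomorphic to the
original one. -/
lemma shift_contract {E : Finset ℕ} {Cm : ℕ → ℕ → ZMod 2} {N0 : Matroid ℕ}
    (hN0 : IsColMatroidOf N0 E Cm) (Ah : ℕ → ℕ → ZMod 2) {r : ℕ}
    (hr : Ah r 0 = 1)
    (hmatch : ∀ k ∈ E, ∀ i, Ah i (k + 1) - Ah r (k + 1) * Ah i 0 = Cm i k) :
    ∃ N' N₁ : Matroid ℕ,
      IsColMatroidOf N' (insert 0 (E.image (· + 1))) Ah ∧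
      IsContraction N₁ N' {0} ∧ MIso N0 N₁ := by
  classical
  obtain ⟨N', hN'⟩ := exists_isColMatroidOf (insert 0 (E.image (· + 1))) Ah
  obtain ⟨N₁, hcontr, hN₁⟩ :=
    exists_contraction_point hN' (z := 0) (Finset.mem_insert_self 0 _) hr
  refine ⟨N', N₁, hN', hcontr, ?_⟩
  have h0img : (0 : ℕ) ∉ E.image (· + 1) := by simp
  have herase : (insert 0 (E.image (· + 1))).erase 0 = E.image (· + 1) :=
    Finset.erase_insert h0img
  have hfamkey : ∀ (I : Set ℕ), I ⊆ ↑E →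
      ∀ (hinj : Set.InjOn (· + 1) I),
      (((fun x : ↥((· + 1) '' I) => fun i => Ah i ↑x - Ah r ↑x * Ah i 0) ∘
        (Equiv.Set.imageOfInjOn (· + 1) I hinj)) = fun x : ↥I => fun i => Cm i ↑x) := by
    intro I hIE hinj
    funext x
    funext i
    show Ah i (↑x + 1) - Ah r (↑x + 1) * Ah i 0 = Cm i ↑x
    exact hmatch ↑x (hIE x.2) i
  refine ⟨fun j => j + 1, ?_, ?_⟩
  · rw [hN0.1, hN₁.1, herase]
    refine ⟨fun x hx => ?_, fun a _ b _ h => by simpa using h, fun y hy => ?_⟩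
    · exact Finset.mem_coe.mpr (Finset.mem_image_of_mem _ (Finset.mem_coe.mp hx))
    · obtain ⟨k, hk, rfl⟩ := Finset.mem_image.mp (Finset.mem_coe.mp hy)
      exact ⟨k, Finset.mem_coe.mpr hk, rfl⟩
  · intro I hI
    rw [hN0.1] at hI
    rw [hN0.2 I, hN₁.2 ((· + 1) '' I)]
    have hinj : Set.InjOn (· + 1) I := fun a _ b _ h => by simpa using h
    constructor
    · rintro ⟨hIE, hlin⟩
      refine ⟨?_, ?_⟩
      · rintro _ ⟨x, hx, rfl⟩
        rw [herase]
        exact Finset.mem_coe.mpr (Finset.mem_image_of_mem _ (Finset.mem_coe.mp (hIE hx)))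
      · rw [← linearIndependent_equiv (Equiv.Set.imageOfInjOn (· + 1) I hinj),
          hfamkey I hIE hinj]
        exact hlin
    · rintro ⟨hsub, hlin⟩
      refine ⟨hI, ?_⟩
      rw [← linearIndependent_equiv (Equiv.Set.imageOfInjOn (· + 1) I hinj),
        hfamkey I hI hinj] at hlin
      exact hlin

end ShiftContract
section ConformHelpers

open FrameTemplate

lemma phiX_CY : PhiX.CY = ∅ := by simp [FrameTemplate.CY, PhiX]

lemma phiC_CY : PhiC.CY = {0} := by simp [FrameTemplate.CY, PhiC]

lemma phiCX_CY : PhiCX.CY = {0} := by simp [FrameTemplate.CY, PhiCX]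

lemma builtFrom_refl (Φ : FrameTemplate (ZMod 2)) (A : ℕ → ℕ → ZMod 2) :
    Φ.BuiltFrom ∅ A A :=
  ⟨fun _ _ _ => rfl, fun j hj => absurd hj (Finset.notMem_empty j)⟩

lemma builtFrom_empty {Φ : FrameTemplate (ZMod 2)} (hY1 : Φ.Y1 = ∅)
    {Z : Finset ℕ} {A' A : ℕ → ℕ → ZMod 2} (hb : Φ.BuiltFrom Z A' A) :
    Z = ∅ ∧ A = A' := by
  have hZ : Z = ∅ := by
    by_contra h
    obtain ⟨j, hj⟩ := Finset.nonempty_iff_ne_empty.mpr h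
    obtain ⟨y, hy, -⟩ := hb.2 j hj
    rw [hY1] at hy
    exact Finset.notMem_empty y hy
  refine ⟨hZ, ?_⟩
  funext i j
  exact hb.1 j (by simp [hZ]) i

lemma vconforms_clean {α : Type*} {M : Matroid α} {Φ : FrameTemplate (ZMod 2)}
    (h : FrameTemplate.VConforms M Φ) (hC : Φ.C = ∅) :
    ∃ (B E Z : Finset ℕ) (A' A : ℕ → ℕ → ZMod 2) (N : Matroid ℕ),
      Φ.VRespects B E Z A' ∧ Φ.BuiltFrom Z A' A ∧ IsColMatroidOf N E A ∧
      MIso M (N ↾ (N.E \ ↑Φ.Y1)) := by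
  obtain ⟨B, E, Z, A', A, N, N₁, hresp, hbuilt, hcol, hcontr, hiso⟩ := h
  have hN₁ : N₁ = N := by
    rw [hC, Finset.coe_empty] at hcontr
    exact isContraction_unique hcontr (isContraction_self_empty N)
  rw [hN₁] at hiso
  exact ⟨B, E, Z, A', A, N, hresp, hbuilt, hcol, hiso⟩

/-- Matroids represented by all-frame matrices virtually conform to `Φ₀`. -/
lemma vconforms_phi0 {α : Type*} {M : Matroid α} (B E : Finset ℕ)
    (A : ℕ → ℕ → ZMod 2) (N : Matroid ℕ)
    (hcol : IsColMatroidOf N E A)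
    (hsupp : ∀ i j, A i j ≠ 0 → i ∈ B ∧ j ∈ E)
    (hframe : ∀ j ∈ E, IsFrameColOn (⊥ : Subgroup (ZMod 2)ˣ) (↑B : Set ℕ) (fun i => A i j))
    (hiso : MIso M N) : FrameTemplate.VConforms M Phi0 := by
  refine ⟨B, E, ∅, A, A, N, N, ?_, builtFrom_refl _ _, hcol, ?_, ?_⟩
  · refine ⟨Finset.empty_subset _, ?_, Finset.empty_subset _, Finset.disjoint_empty_left _,
      hsupp, ?_, ?_, ?_, ?_, ?_, ?_⟩
    · rw [phi0_CY]
      exact Finset.empty_subset _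
    · intro i hi j hj
      rw [phi0_CY] at hj
      exact absurd hj (Finset.notMem_empty j)
    · intro i hi
      exact absurd hi (Finset.notMem_empty i)
    · intro j hj
      exact absurd hj (Finset.notMem_empty j)
    · intro j hjE _ _
      show IsFrameColOn ⊥ (↑B \ ↑(∅ : Finset ℕ)) fun i => A i j
      rw [Finset.coe_empty, Set.diff_empty]
      exact hframe j hjE
    · intro j _ _ _
      show maskOn ∅ (fun i => A i j) ∈ (⊥ : AddSubgroup (ℕ → ZMod 2))
      rw [maskOn_empty]
      exact zero_mem _
    · intro i _ _
      rw [phi0_CY, maskOn_empty]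
      exact zero_mem _
  · show IsContraction N N ↑(∅ : Finset ℕ)
    rw [Finset.coe_empty]
    exact isContraction_self_empty N
  · show MIso M (N ↾ (N.E \ ↑(∅ : Finset ℕ)))
    rw [restrict_diff_empty]
    exact hiso

end ConformHelpers
section RelationY1X

open FrameTemplate

lemma preceq_PhiY1_PhiX : Preceq PhiY1 PhiX := by
  intro α M hw
  classical
  obtain ⟨Φ, hmin, hconf⟩ := hw
  obtain ⟨hΓ, hC, hY0, hX, hY1, hΔ, hΛ⟩ := goodY1_of_minor hmin
  obtain ⟨B, E, Z, A', A, N, hresp, hbuilt, hcol, hiso⟩ := vconforms_clean hconf hC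
  obtain ⟨hXB, hCYE, hZE, hZdisj, hsupp, hA1, hXZ, hZcol, hframe, hLam, hDel⟩ := hresp
  have hCY : Φ.CY = Φ.Y1 := by simp [FrameTemplate.CY, hC, hY0]
  -- A is supported on B-rows and E-columns
  have hAsupp : ∀ i j, A i j ≠ 0 → i ∈ B ∧ j ∈ E := by
    intro i j h
    by_cases hjZ : j ∈ Z
    · obtain ⟨y, hy, hAj⟩ := hbuilt.2 j hjZ
      rw [hAj i] at h
      constructor
      · by_contra hiB
        have h1 : A' i j = 0 := by by_contra h'; exact hiB (hsupp i j h').1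
        have h2 : A' i y = 0 := by by_contra h'; exact hiB (hsupp i y h').1
        rw [h1, h2, add_zero] at h
        exact h rfl
      · exact hZE hjZ
    · rw [hbuilt.1 j hjZ] at h
      exact hsupp i j h
  -- Y₁-columns of A' vanish on rows outside X (since Δ is trivial)
  have hY1rows : ∀ i ∈ B, i ∉ Φ.X → ∀ y ∈ Φ.Y1, A' i y = 0 := by
    intro i hiB hiX y hy
    have hmem := hDel i hiB hiX
    rw [hΔ, AddSubgroup.mem_bot] at hmem
    have := congrFun hmem y
    rw [← hCY] at hy
    simpa [maskOn, hy] using this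
  -- frame columns of A' vanish on X-rows (since Λ is trivial)
  have hXcols : ∀ j ∈ E, j ∉ Φ.CY → j ∉ Z → ∀ x ∈ Φ.X, A' x j = 0 := by
    intro j hjE hjCY hjZ x hx
    have hmem := hLam j hjE hjCY hjZ
    rw [hΛ, AddSubgroup.mem_bot] at hmem
    have := congrFun hmem x
    simpa [maskOn, hx] using this
  -- the matrix representing M (with the deleted Y₁-columns zeroed out)
  set Ab : ℕ → ℕ → ZMod 2 := fun i j => if j ∈ Φ.Y1 then 0 else A i j with hAb
  have hNr : IsColMatroidOf (N ↾ (N.E \ ↑Φ.Y1)) (E \ Φ.Y1) Ab := hcol.restrict Φ.Y1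
  refine ⟨PhiX, Relation.ReflTransGen.refl, insert 0 B, E \ Φ.Y1, ∅, Ab, Ab,
    N ↾ (N.E \ ↑Φ.Y1), N ↾ (N.E \ ↑Φ.Y1), ?_, builtFrom_refl _ _, hNr, ?_, ?_⟩
  · -- VRespects PhiX
    refine ⟨?_, ?_, Finset.empty_subset _, Finset.disjoint_empty_left _, ?_, ?_, ?_, ?_,
      ?_, ?_, ?_⟩
    · show ({0} : Finset ℕ) ⊆ insert 0 B
      simp
    · rw [phiX_CY]
      exact Finset.empty_subset _
    · intro i j h
      rw [hAb] at h
      by_cases hjY : j ∈ Φ.Y1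
      · simp [hjY] at h
      · simp only [hjY, if_false] at h
        exact ⟨Finset.mem_insert_of_mem (hAsupp i j h).1,
          Finset.mem_sdiff.mpr ⟨(hAsupp i j h).2, hjY⟩⟩
    · intro i hi j hj
      rw [phiX_CY] at hj
      exact absurd hj (Finset.notMem_empty j)
    · intro i hi j hj
      exact absurd hj (Finset.notMem_empty j)
    · intro j hj
      exact absurd hj (Finset.notMem_empty j)
    · -- frame condition
      intro j hjE' _ _
      have hjE : j ∈ E := (Finset.mem_sdiff.mp hjE').1
      have hjY1 : j ∉ Φ.Y1 := (Finset.mem_sdiff.mp hjE').2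
      have hcolval : ∀ i, Ab i j = A i j := by
        intro i
        rw [hAb]
        simp [hjY1]
      by_cases hjZ : j ∈ Z
      · -- a Z-column
        obtain ⟨y, hy, hAj⟩ := hbuilt.2 j hjZ
        have hzc := hZcol j hjZ
        -- choose the (possible) unit position
        obtain ⟨bu, hbu⟩ : ∃ bu, ∀ b ∈ (↑B : Set ℕ) \ ↑Φ.X, A' b j ≠ 0 → b = bu := by
          rcases hzc with hzc | ⟨bu, hbu, hbu1, hbu0⟩
          · exact ⟨0, fun b hb hnz => absurd (hzc b hb) hnz⟩
          · refine ⟨bu, fun b hb hnz => ?_⟩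
            by_contra hne
            exact hnz (hbu0 b hb hne)
        apply isFrameColOn_of_pair (b₁ := bu) (b₂ := 1)
        intro b hb hnz
        have hb0 : b ≠ 0 := by
          intro h0
          subst h0
          have : (0 : ℕ) ∈ ({0} : Set ℕ) := rfl
          exact hb.2 (by simp [PhiX])
        have hbB : b ∈ B := by
          rcases Finset.mem_insert.mp (Finset.mem_coe.mp hb.1) with h | h
          · exact absurd h hb0
          · exact h
        rw [hcolval, hAj b] at hnz
        by_cases hbX : b ∈ Φ.X
        · right
          have := hX hbX
          rcases Finset.mem_insert.mp this with h | h
          · exact absurd h hb0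
          · exact Finset.mem_singleton.mp h
        · left
          have hby : A' b y = 0 := hY1rows b hbB hbX y hy
          rw [hby, add_zero] at hnz
          exact hbu b ⟨Finset.mem_coe.mpr hbB, fun h => hbX (Finset.mem_coe.mp h)⟩ hnz
      · -- a frame column
        have hjCY : j ∉ Φ.CY := by rw [hCY]; exact hjY1
        obtain ⟨b₁, b₂, hb12⟩ := (hframe j hjE hjCY hjZ).pair
        apply isFrameColOn_of_pair (b₁ := b₁) (b₂ := b₂)
        intro b hb hnz
        have hb0 : b ≠ 0 := by
          intro h0
          subst h0
          have : (0 : ℕ) ∈ ({0} : Set ℕ) := rfl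
          exact hb.2 (by simp [PhiX])
        have hbB : b ∈ B := by
          rcases Finset.mem_insert.mp (Finset.mem_coe.mp hb.1) with h | h
          · exact absurd h hb0
          · exact h
        rw [hcolval, hbuilt.1 j hjZ b] at hnz
        by_cases hbX : b ∈ Φ.X
        · exact absurd (hXcols j hjE hjCY hjZ b hbX) hnz
        · exact hb12 b ⟨Finset.mem_coe.mpr hbB, fun h => hbX (Finset.mem_coe.mp h)⟩ hnz
    · intro j _ _ _
      exact maskOn_mem_fullOn _ _
    · intro i _ _
      rw [phiX_CY, maskOn_empty]
      exact zero_mem _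
  · show IsContraction _ _ (↑(∅ : Finset ℕ) : Set ℕ)
    rw [Finset.coe_empty]
    exact isContraction_self_empty _
  · show MIso M (_ ↾ (_ \ (↑(∅ : Finset ℕ) : Set ℕ)))
    rw [restrict_diff_empty]
    exact hiso

end RelationY1X
section RelationY0C

open FrameTemplate

lemma preceq_PhiY0_PhiC : Preceq PhiY0 PhiC := by
  intro α M hw
  classical
  obtain ⟨Φ, hmin, hconf⟩ := hw
  obtain ⟨hΓ, hC, hX, hY1, hY0sub⟩ := goodY0_of_minor hmin
  obtain ⟨B, E, Z, A', A, N, hresp, hbuilt, hcol, hiso⟩ := vconforms_clean hconf hC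
  obtain ⟨hXB, hCYE, hZE, hZdisj, hsupp, hA1, hXZ, hZcol, hframe, hLam, hDel⟩ := hresp
  obtain ⟨hZ, hAA'⟩ := builtFrom_empty hY1 hbuilt
  rw [hAA'] at hcol
  have hCY : Φ.CY = Φ.Y0 := by simp [FrameTemplate.CY, hC, hY1]
  have hisoN : MIso M N := by
    rw [hY1, restrict_diff_empty] at hiso
    exact hiso
  rcases Finset.subset_singleton_iff.mp hY0sub with hY0 | hY0
  · -- Y₀ = ∅ : all columns are frame columns; use Φ₀
    have hCY0 : Φ.CY = ∅ := hCY.trans hY0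
    refine ⟨Phi0, minor_phi0_phiC, vconforms_phi0 B E A' N hcol hsupp ?_ hisoN⟩
    intro j hjE
    have hjCY : j ∉ Φ.CY := by rw [hCY0]; exact Finset.notMem_empty j
    have hjZ : j ∉ Z := by rw [hZ]; exact Finset.notMem_empty j
    have hf := hframe j hjE hjCY hjZ
    rw [hΓ, hX, Finset.coe_empty, Set.diff_empty] at hf
    exact hf
  · -- Y₀ = {0} : the main construction
    have h0E : (0 : ℕ) ∈ E := hCYE (by rw [hCY, hY0]; exact Finset.mem_singleton_self 0)
    obtain ⟨r, hrB⟩ := Infinite.exists_notMem_finset B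
    have hrA : ∀ j, A' r j = 0 := fun j => by
      by_contra h; exact hrB (hsupp r j h).1
    set eR : ℕ → ZMod 2 := fun i => if i = r then 1 else 0 with heR
    set Ah : ℕ → ℕ → ZMod 2 := fun i j =>
      if j = 0 then A' i 0 + eR i
      else if j = 1 then eR i
      else if j - 1 ∈ E then A' i (j - 1) else 0 with hAh
    have hr0 : Ah r 0 = 1 := by simp [hAh, heR, hrA 0]
    have hmatch : ∀ k ∈ E, ∀ i, Ah i (k + 1) - Ah r (k + 1) * Ah i 0 = A' i k := by
      intro k hk i
      by_cases hk0 : k = 0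
      · subst hk0
        have e1 : Ah i (0 + 1) = eR i := by simp [hAh]
        have e2 : Ah r (0 + 1) = 1 := by simp [hAh, heR]
        have e3 : Ah i 0 = A' i 0 + eR i := by simp [hAh]
        rw [e1, e2, e3]
        have hd : ∀ a b : ZMod 2, b - 1 * (a + b) = a := by decide
        exact hd _ _
      · have hk00 : k + 1 ≠ 0 := by omega
        have hk1 : k + 1 ≠ 1 := by omega
        have hkm : k + 1 - 1 = k := by omega
        have e1 : ∀ i', Ah i' (k + 1) = A' i' k := by
          intro i'
          simp only [hAh, if_neg hk00, if_neg hk1, hkm, if_pos hk]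
        rw [e1 i, e1 r, hrA k, zero_mul, sub_zero]
    obtain ⟨N', N₁, hN', hcontr, hmiso⟩ := shift_contract hcol Ah hr0 hmatch
    refine ⟨PhiC, Relation.ReflTransGen.refl, insert r B, insert 0 (E.image (· + 1)), ∅,
      Ah, Ah, N', N₁, ?_, builtFrom_refl _ _, hN', ?_, ?_⟩
    · refine ⟨Finset.empty_subset _, ?_, Finset.empty_subset _,
        Finset.disjoint_empty_left _, ?_, ?_, ?_, ?_, ?_, ?_, ?_⟩
      · rw [phiC_CY]
        simp
      · -- support
        intro i j h
        constructor
        · by_contra hiB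
          have hir : i ≠ r := fun he => hiB (he ▸ Finset.mem_insert_self r B)
          have hiB' : i ∉ B := fun he => hiB (Finset.mem_insert_of_mem he)
          have hiA : ∀ j', A' i j' = 0 := fun j' => by
            by_contra h'; exact hiB' (hsupp i j' h').1
          apply h
          simp only [hAh]
          split_ifs <;> simp [heR, hir, hiA]
        · by_contra hjE
          have hj0 : j ≠ 0 := fun he => hjE (by rw [he]; exact Finset.mem_insert_self 0 _)
          have hj1 : j ≠ 1 := by
            intro he
            subst he
            exact hjE (Finset.mem_insert_of_mem (Finset.mem_image_of_mem _ h0E))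
          have hjm : j - 1 ∉ E := by
            intro hm
            apply hjE
            have hje : (j - 1) + 1 = j := by omega
            exact hje ▸ Finset.mem_insert_of_mem (Finset.mem_image_of_mem _ hm)
          apply h
          simp only [hAh, if_neg hj0, if_neg hj1, if_neg hjm]
      · intro i hi j hj
        exact absurd hi (Finset.notMem_empty i)
      · intro i hi
        exact absurd hi (Finset.notMem_empty i)
      · intro j hj
        exact absurd hj (Finset.notMem_empty j)
      · -- frame columns
        intro j hjE' hjCY _
        rw [phiC_CY] at hjCY
        have hj0 : j ≠ 0 := fun he => hjCY (by rw [he]; exact Finset.mem_singleton_self 0)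
        show IsFrameColOn ⊥ (↑(insert r B) \ ↑(∅ : Finset ℕ)) _
        rw [Finset.coe_empty, Set.diff_empty]
        by_cases hj1 : j = 1
        · subst hj1
          apply isFrameColOn_of_pair (b₁ := r) (b₂ := r)
          intro b hb hnz
          by_cases hbr : b = r
          · exact Or.inl hbr
          · exfalso
            apply hnz
            simp [hAh, heR, hbr]
        · have hjm : j - 1 ∈ E ∧ j - 1 ≠ 0 := by
            rcases Finset.mem_insert.mp hjE' with h | h
            · exact absurd h hj0
            · obtain ⟨k, hk, hke⟩ := Finset.mem_image.mp h
              have hjk : j - 1 = k := by omega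
              refine ⟨hjk ▸ hk, ?_⟩
              omega
          have hcolj : ∀ i, Ah i j = A' i (j - 1) := by
            intro i
            simp only [hAh, if_neg hj0, if_neg hj1, if_pos hjm.1]
          have hjmCY : j - 1 ∉ Φ.CY := by
            rw [hCY, hY0]
            simpa using hjm.2
          have hjmZ : j - 1 ∉ Z := by rw [hZ]; exact Finset.notMem_empty _
          obtain ⟨b₁, b₂, hb12⟩ := (hframe (j - 1) hjm.1 hjmCY hjmZ).pair
          apply isFrameColOn_of_pair (b₁ := b₁) (b₂ := b₂)
          intro b hb hnz
          rw [hcolj] at hnz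
          have hbB : b ∈ B := (hsupp b (j - 1) hnz).1
          refine hb12 b ⟨Finset.mem_coe.mpr hbB, ?_⟩ hnz
          rw [hX]
          simp
      · intro j _ _ _
        show maskOn (∅ : Finset ℕ) _ ∈ _
        rw [maskOn_empty]
        exact zero_mem _
      · intro i _ _
        rw [phiC_CY]
        exact maskOn_mem_fullOn _ _
    · show IsContraction N₁ N' ↑({0} : Finset ℕ)
      rw [Finset.coe_singleton]
      exact hcontr
    · show MIso M (N₁ ↾ (N₁.E \ ↑(∅ : Finset ℕ)))
      rw [restrict_diff_empty]
      exact hisoN.trans hmiso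

end RelationY0C
section RelationXCX

open FrameTemplate

lemma preceq_PhiX_PhiCX : Preceq PhiX PhiCX := by
  intro α M hw
  classical
  obtain ⟨Φ, hmin, hconf⟩ := hw
  obtain ⟨hΓ, hC, hY0, hY1, hXsub⟩ := goodX_of_minor hmin
  obtain ⟨B, E, Z, A', A, N, hresp, hbuilt, hcol, hiso⟩ := vconforms_clean hconf hC
  obtain ⟨hXB, hCYE, hZE, hZdisj, hsupp, hA1, hXZ, hZcol, hframe, hLam, hDel⟩ := hresp
  obtain ⟨hZ, hAA'⟩ := builtFrom_empty hY1 hbuilt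
  rw [hAA'] at hcol
  have hCY : Φ.CY = ∅ := by simp [FrameTemplate.CY, hC, hY0, hY1]
  have hisoN : MIso M N := by
    rw [hY1, restrict_diff_empty] at hiso
    exact hiso
  rcases Finset.subset_singleton_iff.mp hXsub with hX | hX
  · -- X = ∅ : all columns frame; use Φ₀
    refine ⟨Phi0, minor_phi0_phiCX, vconforms_phi0 B E A' N hcol hsupp ?_ hisoN⟩
    intro j hjE
    have hf := hframe j hjE (by rw [hCY]; exact Finset.notMem_empty j)
      (by rw [hZ]; exact Finset.notMem_empty j)
    rw [hΓ, hX, Finset.coe_empty, Set.diff_empty] at hf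
    exact hf
  · -- X = {0} : main construction
    have h0B : (0 : ℕ) ∈ B := hXB (by rw [hX]; exact Finset.mem_singleton_self 0)
    obtain ⟨r, hrB⟩ := Infinite.exists_notMem_finset (B ∪ {0, 1})
    have hr0 : r ≠ 0 := fun h => hrB (by rw [h]; simp)
    have hr1 : r ≠ 1 := fun h => hrB (by rw [h]; simp)
    have hrBB : r ∉ B := fun h => hrB (Finset.mem_union_left _ h)
    set σ := Equiv.swap (0 : ℕ) 1 with hσ
    set At : ℕ → ℕ → ZMod 2 := fun i j => A' (σ i) j with hAt
    have hcolt : IsColMatroidOf N E At := by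
      refine ⟨hcol.1, fun I => ?_⟩
      rw [hcol.2 I]
      exact and_congr_right fun _ =>
        (linIndep_rows_equiv σ (fun e : I => fun i => A' i ↑e)).symm
    have hsuppt : ∀ i j, At i j ≠ 0 → σ i ∈ B ∧ j ∈ E := fun i j h => hsupp _ j h
    set c0 : ℕ → ZMod 2 := fun i => if i = 1 ∨ i = r then 1 else 0 with hc0
    set Ah : ℕ → ℕ → ZMod 2 := fun i j =>
      if j = 0 then c0 i else if j - 1 ∈ E then At i (j - 1) else 0 with hAh
    have hrr : Ah r 0 = 1 := by simp [hAh, hc0]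
    have hmatch : ∀ k ∈ E, ∀ i, Ah i (k + 1) - Ah r (k + 1) * Ah i 0 = At i k := by
      intro k hk i
      have hk0 : k + 1 ≠ 0 := by omega
      have hkm : k + 1 - 1 = k := by omega
      have e1 : ∀ i', Ah i' (k + 1) = At i' k := by
        intro i'
        simp only [hAh, if_neg hk0, hkm, if_pos hk]
      have hAtr : At r k = 0 := by
        rw [hAt]
        simp only []
        rw [Equiv.swap_apply_of_ne_of_ne hr0 hr1]
        by_contra h
        exact hrBB (hsupp r k h).1
      rw [e1 i, e1 r, hAtr, zero_mul, sub_zero]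
    obtain ⟨N', N₁, hN', hcontr, hmiso⟩ := shift_contract hcolt Ah hrr hmatch
    refine ⟨PhiCX, Relation.ReflTransGen.refl, insert r (B.image σ),
      insert 0 (E.image (· + 1)), ∅, Ah, Ah, N', N₁, ?_, builtFrom_refl _ _, hN', ?_, ?_⟩
    · refine ⟨?_, ?_, Finset.empty_subset _, Finset.disjoint_empty_left _, ?_, ?_, ?_, ?_,
        ?_, ?_, ?_⟩
      · intro x hx
        have hx1 : x = 1 := Finset.mem_singleton.mp hx
        subst hx1
        refine Finset.mem_insert_of_mem (Finset.mem_image.mpr ⟨0, h0B, ?_⟩)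
        simp [hσ]
      · rw [phiCX_CY]
        simp
      · intro i j h
        constructor
        · by_contra hiB
          have hir : i ≠ r := fun he => hiB (by rw [he]; exact Finset.mem_insert_self r _)
          have hiB' : σ i ∉ B := by
            intro he
            apply hiB
            refine Finset.mem_insert_of_mem (Finset.mem_image.mpr ⟨σ i, he, ?_⟩)
            simp [hσ]
          have hiA : ∀ j', At i j' = 0 := fun j' => by
            by_contra h'
            exact hiB' (hsuppt i j' h').1
          have hi1 : i ≠ 1 := by
            intro he
            apply hiB'
            rw [he]
            simpa [hσ, Equiv.swap_apply_right] using h0B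
          apply h
          simp only [hAh]
          split_ifs <;> simp [hc0, hir, hi1, hiA]
        · by_contra hjE
          have hj0 : j ≠ 0 := fun he => hjE (by rw [he]; exact Finset.mem_insert_self 0 _)
          have hjm : j - 1 ∉ E := by
            intro hm
            apply hjE
            have hje : (j - 1) + 1 = j := by omega
            exact hje ▸ Finset.mem_insert_of_mem (Finset.mem_image_of_mem _ hm)
          apply h
          simp only [hAh, if_neg hj0, if_neg hjm]
      · intro i hi j hj
        rw [phiCX_CY] at hj
        have hi1 : i = 1 := Finset.mem_singleton.mp hi
        have hj0 : j = 0 := Finset.mem_singleton.mp hj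
        subst hi1
        subst hj0
        have h1 : Ah 1 0 = 1 := by simp [hAh, hc0]
        have h2 : PhiCX.A1 1 0 = 1 := by simp [PhiCX]
        rw [h1, h2]
      · intro i hi j hj
        exact absurd hj (Finset.notMem_empty j)
      · intro j hj
        exact absurd hj (Finset.notMem_empty j)
      · intro j hjE' hjCY _
        rw [phiCX_CY] at hjCY
        have hj0 : j ≠ 0 := fun he => hjCY (by rw [he]; exact Finset.mem_singleton_self 0)
        have hjm : j - 1 ∈ E := by
          rcases Finset.mem_insert.mp hjE' with h | h
          · exact absurd h hj0
          · obtain ⟨k, hk, hke⟩ := Finset.mem_image.mp h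
            have hkj : j - 1 = k := by omega
            rw [hkj]
            exact hk
        have hcolj : ∀ i, Ah i j = At i (j - 1) := fun i => by
          simp only [hAh, if_neg hj0, if_pos hjm]
        obtain ⟨b₁, b₂, hb12⟩ := (hframe (j - 1) hjm
          (by rw [hCY]; exact Finset.notMem_empty _)
          (by rw [hZ]; exact Finset.notMem_empty _)).pair
        apply isFrameColOn_of_pair (b₁ := σ b₁) (b₂ := σ b₂)
        intro b hb hnz
        rw [hcolj] at hnz
        have hbB : σ b ∈ B := (hsupp (σ b) (j - 1) hnz).1
        have hb1 : b ≠ 1 := by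
          intro he
          apply hb.2
          rw [he]
          show (1 : ℕ) ∈ (↑({1} : Finset ℕ) : Set ℕ)
          simp
        have hσb0 : σ b ∉ Φ.X := by
          rw [hX]
          intro he
          have he' : σ b = 0 := Finset.mem_singleton.mp he
          apply hb1
          have := congrArg σ he'
          simpa [hσ, Equiv.swap_apply_self, Equiv.swap_apply_left] using this
        have hres := hb12 (σ b) ⟨Finset.mem_coe.mpr hbB, fun hc => hσb0 (Finset.mem_coe.mp hc)⟩ hnz
        rcases hres with h | h
        · left
          have := congrArg σ h
          simpa [hσ, Equiv.swap_apply_self] using this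
        · right
          have := congrArg σ h
          simpa [hσ, Equiv.swap_apply_self] using this
      · intro j _ _ _
        exact maskOn_mem_fullOn _ _
      · intro i _ _
        rw [phiCX_CY]
        exact maskOn_mem_fullOn _ _
    · show IsContraction N₁ N' ↑({0} : Finset ℕ)
      rw [Finset.coe_singleton]
      exact hcontr
    · show MIso M (N₁ ↾ (N₁.E \ ↑(∅ : Finset ℕ)))
      rw [restrict_diff_empty]
      exact hisoN.trans hmiso

end RelationXCX
section RelationCCX

open FrameTemplate

lemma preceq_PhiC_PhiCX : Preceq PhiC PhiCX := by
  intro α M hw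
  classical
  obtain ⟨Φ, hmin, hconf⟩ := hw
  obtain ⟨hΓ, hX, hY0, hY1, hCsub⟩ := goodC_of_minor hmin
  obtain ⟨B, E, Z, A', A, N, N₁, hresp, hbuilt, hcol, hcontr, hiso⟩ := hconf
  obtain ⟨hXB, hCYE, hZE, hZdisj, hsupp, hA1, hXZ, hZcol, hframe, hLam, hDel⟩ := hresp
  obtain ⟨hZ, hAA'⟩ := builtFrom_empty hY1 hbuilt
  rw [hAA'] at hcol
  have hCY : Φ.CY = Φ.C := by simp [FrameTemplate.CY, hY0, hY1]
  rcases Finset.subset_singleton_iff.mp hCsub with hC | hC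
  · -- C = ∅ : no contraction, all columns frame; use Φ₀
    have hN₁ : N₁ = N := by
      rw [hC, Finset.coe_empty] at hcontr
      exact isContraction_unique hcontr (isContraction_self_empty N)
    have hisoN : MIso M N := by
      rw [hN₁, hY1, restrict_diff_empty] at hiso
      exact hiso
    refine ⟨Phi0, minor_phi0_phiCX, vconforms_phi0 B E A' N hcol hsupp ?_ hisoN⟩
    intro j hjE
    have hf := hframe j hjE (by rw [hCY, hC]; exact Finset.notMem_empty j)
      (by rw [hZ]; exact Finset.notMem_empty j)
    rw [hΓ, hX, Finset.coe_empty, Set.diff_empty] at hf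
    exact hf
  · -- C = {0}
    have h0E : (0 : ℕ) ∈ E := hCYE (by rw [hCY, hC]; exact Finset.mem_singleton_self 0)
    have hisoN₁ : MIso M N₁ := by
      rw [hY1, restrict_diff_empty] at hiso
      exact hiso
    rw [hC, Finset.coe_singleton] at hcontr
    by_cases hδ : ∃ b, A' b 0 ≠ 0
    · -- the contracted column is nonzero
      obtain ⟨bs, hbs⟩ := hδ
      have hbs1 : A' bs 0 = 1 := zmod2_ne_zero hbs
      have hbsB : bs ∈ B := (hsupp bs 0 hbs).1
      set σ := Equiv.swap bs 1 with hσ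
      set Ah : ℕ → ℕ → ZMod 2 := fun i j => A' (σ i) j with hAh
      have hcolt : IsColMatroidOf N E Ah := by
        refine ⟨hcol.1, fun I => ?_⟩
        rw [hcol.2 I]
        exact and_congr_right fun _ =>
          (linIndep_rows_equiv σ (fun e : I => fun i => A' i ↑e)).symm
      refine ⟨PhiCX, Relation.ReflTransGen.refl, B.image σ, E, ∅, Ah, Ah, N, N₁, ?_,
        builtFrom_refl _ _, hcolt, ?_, ?_⟩
      · refine ⟨?_, ?_, Finset.empty_subset _, Finset.disjoint_empty_left _, ?_, ?_, ?_,
          ?_, ?_, ?_, ?_⟩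
        · intro x hx
          have hx1 : x = 1 := Finset.mem_singleton.mp hx
          subst hx1
          refine Finset.mem_image.mpr ⟨bs, hbsB, ?_⟩
          simp [hσ]
        · rw [phiCX_CY]
          simpa using h0E
        · intro i j h
          have h2 := hsupp (σ i) j h
          refine ⟨Finset.mem_image.mpr ⟨σ i, h2.1, ?_⟩, h2.2⟩
          simp [hσ, Equiv.swap_apply_self]
        · intro i hi j hj
          rw [phiCX_CY] at hj
          have hi1 : i = 1 := Finset.mem_singleton.mp hi
          have hj0 : j = 0 := Finset.mem_singleton.mp hj
          subst hi1
          subst hj0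
          have h1 : Ah 1 0 = 1 := by
            show A' (σ 1) 0 = 1
            rw [hσ, Equiv.swap_apply_right]
            exact hbs1
          have h2 : PhiCX.A1 1 0 = 1 := by simp [PhiCX]
          rw [h1, h2]
        · intro i hi j hj
          exact absurd hj (Finset.notMem_empty j)
        · intro j hj
          exact absurd hj (Finset.notMem_empty j)
        · intro j hjE hjCY _
          rw [phiCX_CY] at hjCY
          have hj0 : j ≠ 0 := fun he => hjCY (by rw [he]; exact Finset.mem_singleton_self 0)
          have hjCY' : j ∉ Φ.CY := by
            rw [hCY, hC]
            simpa using hj0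
          obtain ⟨b₁, b₂, hb12⟩ := (hframe j hjE hjCY'
            (by rw [hZ]; exact Finset.notMem_empty _)).pair
          apply isFrameColOn_of_pair (b₁ := σ b₁) (b₂ := σ b₂)
          intro b hb hnz
          have hmem : σ b ∈ (↑B : Set ℕ) \ ↑Φ.X := by
            refine ⟨Finset.mem_coe.mpr (hsupp (σ b) j hnz).1, ?_⟩
            rw [hX]
            simp
          rcases hb12 (σ b) hmem hnz with h | h
          · left
            have := congrArg σ h
            simpa [hσ, Equiv.swap_apply_self] using this
          · right
            have := congrArg σ h
            simpa [hσ, Equiv.swap_apply_self] using this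
        · intro j _ _ _
          exact maskOn_mem_fullOn _ _
        · intro i _ _
          rw [phiCX_CY]
          exact maskOn_mem_fullOn _ _
      · show IsContraction N₁ N ↑({0} : Finset ℕ)
        rw [Finset.coe_singleton]
        exact hcontr
      · show MIso M (N₁ ↾ (N₁.E \ ↑(∅ : Finset ℕ)))
        rw [restrict_diff_empty]
        exact hisoN₁
    · -- the contracted column is zero (a loop); use Φ₀
      push_neg at hδ
      have h0ind : ¬ N.Indep {0} := by
        intro hind
        have hli := ((hcol.2 {0}).mp hind).2
        have hne := hli.ne_zero ⟨0, rfl⟩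
        apply hne
        funext i
        exact hδ i
      have h0' : ({0} : Set ℕ) ∩ N.E = {0} := by
        refine Set.inter_eq_self_of_subset_left ?_
        rw [hcol.1]
        simpa using h0E
      have hloop : IsContraction (N ↾ (N.E \ {0})) N {0} := by
        refine ⟨by rw [Matroid.restrict_ground_eq], fun I => ?_⟩
        rw [Matroid.restrict_indep_iff]
        have hbasis : N.IsBasis ∅ ({0} ∩ N.E) := by
          rw [h0']
          refine (Matroid.isBasis_iff (by rw [hcol.1]; simpa using h0E)).mpr
            ⟨N.empty_indep, Set.empty_subset _, ?_⟩
          intro J hJind _ hJ0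
          rcases Set.subset_singleton_iff_eq.mp hJ0 with h | h
          · exact h.symm
          · exact absurd (h ▸ hJind) h0ind
        constructor
        · rintro ⟨hind, hsub⟩
          exact ⟨hsub, ∅, hbasis, by rwa [Set.union_empty]⟩
        · rintro ⟨hsub, J, hJ, hIJ⟩
          rw [h0'] at hJ
          have hJJ : J = ∅ := by
            rcases Set.subset_singleton_iff_eq.mp hJ.subset with h | h
            · exact h
            · exact absurd (h ▸ hJ.indep) h0ind
          subst hJJ
          rw [Set.union_empty] at hIJ
          exact ⟨hIJ, hsub⟩
      have hN₁' : N₁ = N ↾ (N.E \ {0}) := isContraction_unique hcontr hloop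
      have hisoN' : MIso M (N ↾ (N.E \ {0})) := by
        rw [hN₁'] at hisoN₁
        exact hisoN₁
      have hNr := hcol.restrict ({0} : Finset ℕ)
      refine ⟨Phi0, minor_phi0_phiCX, vconforms_phi0 B (E \ {0})
        (fun i j => if j ∈ ({0} : Finset ℕ) then 0 else A' i j) _ hNr ?_ ?_ ?_⟩
      · intro i j h
        by_cases hj : j ∈ ({0} : Finset ℕ)
        · simp [hj] at h
        · simp only [if_neg hj] at h
          exact ⟨(hsupp i j h).1, Finset.mem_sdiff.mpr ⟨(hsupp i j h).2, hj⟩⟩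
      · intro j hjE'
        have hjE : j ∈ E := (Finset.mem_sdiff.mp hjE').1
        have hj0 : j ∉ ({0} : Finset ℕ) := (Finset.mem_sdiff.mp hjE').2
        have hjCY' : j ∉ Φ.CY := by
          rw [hCY, hC]
          exact hj0
        obtain ⟨b₁, b₂, hb12⟩ := (hframe j hjE hjCY'
          (by rw [hZ]; exact Finset.notMem_empty _)).pair
        apply isFrameColOn_of_pair (b₁ := b₁) (b₂ := b₂)
        intro b hb hnz
        simp only [if_neg hj0] at hnz
        refine hb12 b ⟨hb, ?_⟩ hnz
        rw [hX]
        simp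
      · have hcoe : (↑({0} : Finset ℕ) : Set ℕ) = {0} := Finset.coe_singleton 0
        rw [hcoe]
        exact hisoN'

end RelationCCX
section RelationY1C

open FrameTemplate

lemma preceq_PhiY1_PhiC : Preceq PhiY1 PhiC := by
  intro α M hw
  classical
  obtain ⟨Φ, hmin, hconf⟩ := hw
  obtain ⟨hΓ, hC, hY0, hX, hY1, hΔ, hΛ⟩ := goodY1_of_minor hmin
  obtain ⟨B, E, Z, A', A, N, hresp, hbuilt, hcol, hiso⟩ := vconforms_clean hconf hC
  obtain ⟨hXB, hCYE, hZE, hZdisj, hsupp, hA1, hXZ, hZcol, hframe, hLam, hDel⟩ := hresp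
  have hCY : Φ.CY = Φ.Y1 := by simp [FrameTemplate.CY, hC, hY0]
  -- A is supported on B-rows and E-columns
  have hAsupp : ∀ i j, A i j ≠ 0 → i ∈ B ∧ j ∈ E := by
    intro i j h
    by_cases hjZ : j ∈ Z
    · obtain ⟨y, hy, hAj⟩ := hbuilt.2 j hjZ
      rw [hAj i] at h
      constructor
      · by_contra hiB
        have h1 : A' i j = 0 := by by_contra h'; exact hiB (hsupp i j h').1
        have h2 : A' i y = 0 := by by_contra h'; exact hiB (hsupp i y h').1
        rw [h1, h2, add_zero] at h
        exact h rfl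
      · exact hZE hjZ
    · rw [hbuilt.1 j hjZ] at h
      exact hsupp i j h
  have hY1rows : ∀ i ∈ B, i ∉ Φ.X → ∀ y ∈ Φ.Y1, A' i y = 0 := by
    intro i hiB hiX y hy
    have hmem := hDel i hiB hiX
    rw [hΔ, AddSubgroup.mem_bot] at hmem
    have := congrFun hmem y
    rw [← hCY] at hy
    simpa [maskOn, hy] using this
  have hXcols : ∀ j ∈ E, j ∉ Φ.CY → j ∉ Z → ∀ x ∈ Φ.X, A' x j = 0 := by
    intro j hjE hjCY hjZ x hx
    have hmem := hLam j hjE hjCY hjZ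
    rw [hΛ, AddSubgroup.mem_bot] at hmem
    have := congrFun hmem x
    simpa [maskOn, hx] using this
  set Ab : ℕ → ℕ → ZMod 2 := fun i j => if j ∈ Φ.Y1 then 0 else A i j with hAbdef
  have hNr : IsColMatroidOf (N ↾ (N.E \ ↑Φ.Y1)) (E \ Φ.Y1) Ab := hcol.restrict Φ.Y1
  have hAbsupp : ∀ i j, Ab i j ≠ 0 → i ∈ B ∧ j ∈ E \ Φ.Y1 := by
    intro i j h
    by_cases hj : j ∈ Φ.Y1
    · simp [hAbdef, hj] at h
    · simp only [hAbdef, if_neg hj] at h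
      exact ⟨(hAsupp i j h).1, Finset.mem_sdiff.mpr ⟨(hAsupp i j h).2, hj⟩⟩
  -- the unit positions of the Z-columns
  have hbu : ∀ j ∈ Z, ∃ bu, ∀ b ∈ (↑B : Set ℕ) \ ↑Φ.X, A' b j ≠ 0 → b = bu := by
    intro j hjZ
    rcases hZcol j hjZ with hzc | ⟨bu, hbu', hbu1, hbu0⟩
    · exact ⟨0, fun b hb hnz => absurd (hzc b hb) hnz⟩
    · refine ⟨bu, fun b hb hnz => ?_⟩
      by_contra hne
      exact hnz (hbu0 b hb hne)
  by_cases hX01 : Φ.X = {0, 1}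
  · -- main case
    have h0X : (0 : ℕ) ∈ Φ.X := by rw [hX01]; simp
    have h1X : (1 : ℕ) ∈ Φ.X := by rw [hX01]; simp
    have h0B : (0 : ℕ) ∈ B := hXB h0X
    have h1B : (1 : ℕ) ∈ B := hXB h1X
    obtain ⟨r, hrB⟩ := Infinite.exists_notMem_finset B
    have hr0 : r ≠ 0 := fun h => hrB (h ▸ h0B)
    have hr1 : r ≠ 1 := fun h => hrB (h ▸ h1B)
    have hAbr : ∀ k, Ab r k = 0 := by
      intro k
      by_contra h
      exact hrB (hAbsupp r k h).1
    set w : ℕ → ZMod 2 := fun i => if i = 0 ∨ i = 1 ∨ i = r then 1 else 0 with hwdef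
    set Ah : ℕ → ℕ → ZMod 2 := fun i j =>
      if j = 0 then w i
      else if j - 1 ∈ E \ Φ.Y1 then Ab i (j - 1) + Ab 0 (j - 1) * Ab 1 (j - 1) * w i
      else 0 with hAhdef
    have hwr : w r = 1 := by simp [hwdef]
    have hrr : Ah r 0 = 1 := by simp [hAhdef, hwdef]
    have hcolj : ∀ j, j ≠ 0 → j - 1 ∈ E \ Φ.Y1 →
        ∀ i, Ah i j = Ab i (j - 1) + Ab 0 (j - 1) * Ab 1 (j - 1) * w i := by
      intro j hj0 hjm i
      simp only [hAhdef, if_neg hj0, if_pos hjm]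
    have hmatch : ∀ k ∈ E \ Φ.Y1, ∀ i,
        Ah i (k + 1) - Ah r (k + 1) * Ah i 0 = Ab i k := by
      intro k hk i
      have hk0 : k + 1 ≠ 0 := by omega
      have hkm : k + 1 - 1 = k := by omega
      have e1 : ∀ i', Ah i' (k + 1) = Ab i' k + Ab 0 k * Ab 1 k * w i' := by
        intro i'
        have := hcolj (k + 1) hk0 (by rwa [hkm]) i'
        rwa [hkm] at this
      have e0 : ∀ i', Ah i' 0 = w i' := by
        intro i'
        simp [hAhdef]
      rw [e1 i, e1 r, e0 i, hAbr k, hwr]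
      ring
    obtain ⟨N', N₁, hN', hcontr, hmiso⟩ := shift_contract hNr Ah hrr hmatch
    refine ⟨PhiC, Relation.ReflTransGen.refl, insert r B,
      insert 0 ((E \ Φ.Y1).image (· + 1)), ∅, Ah, Ah, N', N₁, ?_,
      builtFrom_refl _ _, hN', ?_, ?_⟩
    · refine ⟨Finset.empty_subset _, ?_, Finset.empty_subset _,
        Finset.disjoint_empty_left _, ?_, ?_, ?_, ?_, ?_, ?_, ?_⟩
      · rw [phiC_CY]
        simp
      · -- support of Ah
        intro i j h
        constructor
        · by_contra hiB
          have hir : i ≠ r := fun he => hiB (by rw [he]; exact Finset.mem_insert_self r _)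
          have hiB' : i ∉ B := fun he => hiB (Finset.mem_insert_of_mem he)
          have hi0 : i ≠ 0 := fun he => hiB' (he ▸ h0B)
          have hi1 : i ≠ 1 := fun he => hiB' (he ▸ h1B)
          have hiw : w i = 0 := by simp [hwdef, hi0, hi1, hir]
          have hiA : ∀ k, Ab i k = 0 := by
            intro k
            by_contra h'
            exact hiB' (hAbsupp i k h').1
          apply h
          simp only [hAhdef]
          split_ifs <;> simp [hiw, hiA]
        · by_contra hjE
          have hj0 : j ≠ 0 := fun he => hjE (by rw [he]; exact Finset.mem_insert_self 0 _)
          have hjm : j - 1 ∉ E \ Φ.Y1 := by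
            intro hm
            apply hjE
            have hje : (j - 1) + 1 = j := by omega
            exact hje ▸ Finset.mem_insert_of_mem (Finset.mem_image_of_mem _ hm)
          apply h
          simp only [hAhdef, if_neg hj0, if_neg hjm]
      · intro i hi j hj
        exact absurd hi (Finset.notMem_empty i)
      · intro i hi
        exact absurd hi (Finset.notMem_empty i)
      · intro j hj
        exact absurd hj (Finset.notMem_empty j)
      · -- frame columns
        intro j hjE' hjCY _
        rw [phiC_CY] at hjCY
        have hj0 : j ≠ 0 := fun he => hjCY (by rw [he]; exact Finset.mem_singleton_self 0)
        show IsFrameColOn ⊥ (↑(insert r B) \ ↑(∅ : Finset ℕ)) _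
        rw [Finset.coe_empty, Set.diff_empty]
        have hjm : j - 1 ∈ E \ Φ.Y1 := by
          rcases Finset.mem_insert.mp hjE' with h | h
          · exact absurd h hj0
          · obtain ⟨k, hk, hke⟩ := Finset.mem_image.mp h
            have hkj : j - 1 = k := by omega
            rw [hkj]
            exact hk
        set k := j - 1 with hkdef
        have hkE : k ∈ E := (Finset.mem_sdiff.mp hjm).1
        have hkY1 : k ∉ Φ.Y1 := (Finset.mem_sdiff.mp hjm).2
        have hcolval : ∀ i, Ah i j = Ab i k + Ab 0 k * Ab 1 k * w i := hcolj j hj0 hjm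
        have hAbA : ∀ i, Ab i k = A i k := by
          intro i
          simp only [hAbdef, if_neg hkY1]
        -- entries off {0,1,r} are the original entries
        have hoff : ∀ b ∈ B, b ∉ Φ.X → b ≠ r → Ah b j = A' b k ∨
            (k ∈ Z ∧ Ah b j = A' b k) := by
          intro b hbB hbX hbr
          left
          have hwb : w b = 0 := by
            have hb0 : b ≠ 0 := fun he => hbX (he ▸ h0X)
            have hb1 : b ≠ 1 := fun he => hbX (he ▸ h1X)
            simp [hwdef, hb0, hb1, hbr]
          rw [hcolval, hwb, mul_zero, add_zero, hAbA]
          by_cases hkZ : k ∈ Z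
          · obtain ⟨y, hy, hAj⟩ := hbuilt.2 k hkZ
            rw [hAj b, hY1rows b hbB hbX y hy, add_zero]
          · rw [hbuilt.1 k hkZ]
        by_cases hkZ : k ∈ Z
        · -- a Z-column
          obtain ⟨bu, hbuk⟩ := hbu k hkZ
          obtain ⟨y, hy, hAj⟩ := hbuilt.2 k hkZ
          -- the X-entries
          have hv0 : A 0 k = A' 0 y := by rw [hAj 0, hXZ 0 h0X k hkZ, zero_add]
          have hv1 : A 1 k = A' 1 y := by rw [hAj 1, hXZ 1 h1X k hkZ, zero_add]
          have hval : ∀ b, b = 0 ∨ b = 1 ∨ b = r →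
              Ah b j = Ab b k + Ab 0 k * Ab 1 k := by
            intro b hb
            have hwb : w b = 1 := by simp [hwdef, hb]
            rw [hcolval, hwb, mul_one]
          -- case on the two X-entries
          rcases zmod2_cases (Ab 0 k) with hva | hva <;>
            rcases zmod2_cases (Ab 1 k) with hvb | hvb
          · -- (0,0)
            apply isFrameColOn_of_pair (b₁ := bu) (b₂ := bu)
            intro b hb hnz
            by_cases hbr : b = r
            · exfalso
              apply hnz
              show Ah b j = 0
              rw [hval b (Or.inr (Or.inr hbr)), hbr, hAbr, hva, hvb]
              decide
            by_cases hb0 : b = 0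
            · exfalso
              apply hnz
              show Ah b j = 0
              rw [hval b (Or.inl hb0), hb0, hva, hvb]
              decide
            by_cases hb1 : b = 1
            · exfalso
              apply hnz
              show Ah b j = 0
              rw [hval b (Or.inr (Or.inl hb1)), hb1, hva, hvb]
              decide
            · have hbB : b ∈ B := by
                rcases Finset.mem_insert.mp (Finset.mem_coe.mp hb) with h | h
                · exact absurd h hbr
                · exact h
              have hbX : b ∉ Φ.X := by
                rw [hX01]
                simp [hb0, hb1]
              rcases hoff b hbB hbX hbr with h | ⟨_, h⟩ <;>
                · rw [h] at hnz
                  exact Or.inl (hbuk b ⟨Finset.mem_coe.mpr hbB,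
                    fun hc => hbX (Finset.mem_coe.mp hc)⟩ hnz)
          · -- (0,1)
            apply isFrameColOn_of_pair (b₁ := bu) (b₂ := 1)
            intro b hb hnz
            by_cases hbr : b = r
            · exfalso
              apply hnz
              show Ah b j = 0
              rw [hval b (Or.inr (Or.inr hbr)), hbr, hAbr, hva, hvb]
              decide
            by_cases hb0 : b = 0
            · exfalso
              apply hnz
              show Ah b j = 0
              rw [hval b (Or.inl hb0), hb0, hva, hvb]
              decide
            by_cases hb1 : b = 1
            · exact Or.inr hb1
            · have hbB : b ∈ B := by
                rcases Finset.mem_insert.mp (Finset.mem_coe.mp hb) with h | h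
                · exact absurd h hbr
                · exact h
              have hbX : b ∉ Φ.X := by
                rw [hX01]
                simp [hb0, hb1]
              rcases hoff b hbB hbX hbr with h | ⟨_, h⟩ <;>
                · rw [h] at hnz
                  exact Or.inl (hbuk b ⟨Finset.mem_coe.mpr hbB,
                    fun hc => hbX (Finset.mem_coe.mp hc)⟩ hnz)
          · -- (1,0)
            apply isFrameColOn_of_pair (b₁ := bu) (b₂ := 0)
            intro b hb hnz
            by_cases hbr : b = r
            · exfalso
              apply hnz
              show Ah b j = 0
              rw [hval b (Or.inr (Or.inr hbr)), hbr, hAbr, hva, hvb]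
              decide
            by_cases hb0 : b = 0
            · exact Or.inr hb0
            by_cases hb1 : b = 1
            · exfalso
              apply hnz
              show Ah b j = 0
              rw [hval b (Or.inr (Or.inl hb1)), hb1, hva, hvb]
              decide
            · have hbB : b ∈ B := by
                rcases Finset.mem_insert.mp (Finset.mem_coe.mp hb) with h | h
                · exact absurd h hbr
                · exact h
              have hbX : b ∉ Φ.X := by
                rw [hX01]
                simp [hb0, hb1]
              rcases hoff b hbB hbX hbr with h | ⟨_, h⟩ <;>
                · rw [h] at hnz
                  exact Or.inl (hbuk b ⟨Finset.mem_coe.mpr hbB,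
                    fun hc => hbX (Finset.mem_coe.mp hc)⟩ hnz)
          · -- (1,1)
            apply isFrameColOn_of_pair (b₁ := bu) (b₂ := r)
            intro b hb hnz
            by_cases hbr : b = r
            · exact Or.inr hbr
            by_cases hb0 : b = 0
            · exfalso
              apply hnz
              show Ah b j = 0
              rw [hval b (Or.inl hb0), hb0, hva, hvb]
              decide
            by_cases hb1 : b = 1
            · exfalso
              apply hnz
              show Ah b j = 0
              rw [hval b (Or.inr (Or.inl hb1)), hb1, hva, hvb]
              decide
            · have hbB : b ∈ B := by
                rcases Finset.mem_insert.mp (Finset.mem_coe.mp hb) with h | h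
                · exact absurd h hbr
                · exact h
              have hbX : b ∉ Φ.X := by
                rw [hX01]
                simp [hb0, hb1]
              rcases hoff b hbB hbX hbr with h | ⟨_, h⟩ <;>
                · rw [h] at hnz
                  exact Or.inl (hbuk b ⟨Finset.mem_coe.mpr hbB,
                    fun hc => hbX (Finset.mem_coe.mp hc)⟩ hnz)
        · -- a frame column
          have hkCY : k ∉ Φ.CY := by rw [hCY]; exact hkY1
          have he0 : Ab 0 k = 0 := by
            rw [hAbA, hbuilt.1 k hkZ]
            exact hXcols k hkE hkCY hkZ 0 h0X
          obtain ⟨b₁, b₂, hb12⟩ := (hframe k hkE hkCY hkZ).pair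
          apply isFrameColOn_of_pair (b₁ := b₁) (b₂ := b₂)
          intro b hb hnz
          rw [hcolval, he0, zero_mul, zero_mul, add_zero, hAbA, hbuilt.1 k hkZ] at hnz
          have hbB : b ∈ B := (hsupp b k hnz).1
          by_cases hbX : b ∈ Φ.X
          · exact absurd (hXcols k hkE hkCY hkZ b hbX) hnz
          · exact hb12 b ⟨Finset.mem_coe.mpr hbB,
              fun hc => hbX (Finset.mem_coe.mp hc)⟩ hnz
      · intro j _ _ _
        show maskOn (∅ : Finset ℕ) _ ∈ _
        rw [maskOn_empty]
        exact zero_mem _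
      · intro i _ _
        rw [phiC_CY]
        exact maskOn_mem_fullOn _ _
    · show IsContraction N₁ N' ↑({0} : Finset ℕ)
      rw [Finset.coe_singleton]
      exact hcontr
    · show MIso M (N₁ ↾ (N₁.E \ ↑(∅ : Finset ℕ)))
      rw [restrict_diff_empty]
      exact hiso.trans hmiso
  · -- degenerate case: |X| ≤ 1, all columns of Ab are frame columns; use Φ₀
    have hsmall : ∃ x0, Φ.X ⊆ {x0} := by
      by_cases h0 : (0 : ℕ) ∈ Φ.X
      · by_cases h1 : (1 : ℕ) ∈ Φ.X
        · exfalso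
          apply hX01
          refine Finset.Subset.antisymm hX ?_
          intro x hx
          rcases Finset.mem_insert.mp hx with h | h
          · rwa [h]
          · rwa [Finset.mem_singleton.mp h]
        · refine ⟨0, fun x hx => ?_⟩
          rcases Finset.mem_insert.mp (hX hx) with h | h
          · simp [h]
          · rw [Finset.mem_singleton.mp h] at hx
            exact absurd hx h1
      · refine ⟨1, fun x hx => ?_⟩
        rcases Finset.mem_insert.mp (hX hx) with h | h
        · rw [h] at hx
          exact absurd hx h0
        · simpa using h
    obtain ⟨x0, hx0⟩ := hsmall
    refine ⟨Phi0, minor_phi0_phiC, vconforms_phi0 B (E \ Φ.Y1) Ab _ hNr hAbsupp ?_ hiso⟩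
    intro j hjE'
    have hjE : j ∈ E := (Finset.mem_sdiff.mp hjE').1
    have hjY1 : j ∉ Φ.Y1 := (Finset.mem_sdiff.mp hjE').2
    have hcolval : ∀ i, Ab i j = A i j := by
      intro i
      simp only [hAbdef, if_neg hjY1]
    by_cases hjZ : j ∈ Z
    · obtain ⟨bu, hbuk⟩ := hbu j hjZ
      obtain ⟨y, hy, hAj⟩ := hbuilt.2 j hjZ
      apply isFrameColOn_of_pair (b₁ := bu) (b₂ := x0)
      intro b hb hnz
      rw [hcolval, hAj b] at hnz
      by_cases hbX : b ∈ Φ.X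
      · exact Or.inr (Finset.mem_singleton.mp (hx0 hbX))
      · have hbB : b ∈ B := Finset.mem_coe.mp hb
        rw [hY1rows b hbB hbX y hy, add_zero] at hnz
        exact Or.inl (hbuk b ⟨hb, fun hc => hbX (Finset.mem_coe.mp hc)⟩ hnz)
    · have hjCY : j ∉ Φ.CY := by rw [hCY]; exact hjY1
      obtain ⟨b₁, b₂, hb12⟩ := (hframe j hjE hjCY hjZ).pair
      apply isFrameColOn_of_pair (b₁ := b₁) (b₂ := b₂)
      intro b hb hnz
      rw [hcolval, hbuilt.1 j hjZ] at hnz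
      by_cases hbX : b ∈ Φ.X
      · exact absurd (hXcols j hjE hjCY hjZ b hbX) hnz
      · exact hb12 b ⟨hb, fun hc => hbX (Finset.mem_coe.mp hc)⟩ hnz

end RelationY1C

open FrameTemplate in
/-- The relations `Φ_{Y₁} ⪯ Φ_X`, `Φ_{Y₁} ⪯ Φ_C`, `Φ_{Y₀} ⪯ Φ_C`,
`Φ_C ⪯ Φ_{CX}`, and `Φ_X ⪯ Φ_{CX}` hold. -/
theorem template_relations :
    Preceq PhiY1 PhiX ∧ Preceq PhiY1 PhiC ∧ Preceq PhiY0 PhiC ∧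
      Preceq PhiC PhiCX ∧ Preceq PhiX PhiCX := by
  exact ⟨preceq_PhiY1_PhiX, preceq_PhiY1_PhiC, preceq_PhiY0_PhiC, preceq_PhiC_PhiCX,
    preceq_PhiX_PhiCX⟩

end TemplatePaper
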